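/- arXiv:2306.00615 — 3 statements merged into one kernel-verified Lean document; each statement's English description precedes it below -/
import Mathlib

section
/- For every non-constant Boolean function f:{0,1}^m→{0,1} and every n∈ℕ: (1) there exists a function g:{0,1}^n→{0,1} such that C(KW_f ⋄ KW_g) ≥ Cphd(KW_f ⋄ MUX_n) − log₂(m·n) − 3; and (2) there exists a function g:{0,1}^n→{0,1} such that C(KW_f ⊛ KW_g) ≥ Cphd(KW_f ⊛ MUX_n) − log₂(m·n) − 4. -/
/-! ### Basic objects: Boolean functions, matrices, compositions -/

/-- Boolean functions on `n`-bit strings. -/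
abbrev BFunc (n : ℕ) : Type := (Fin n → Bool) → Bool

/-- Boolean `m × n` matrices, viewed as tuples of rows. -/
abbrev BMat (m n : ℕ) : Type := Fin m → Fin n → Bool

/-- The column vector obtained by applying `g` to every row of `X`. -/
def gRows {m n : ℕ} (g : BFunc n) (X : BMat m n) : Fin m → Bool := fun i => g (X i)

/-- The composition `f ⋄ g` applied to a matrix `X`. -/
def compFG {m n : ℕ} (f : BFunc m) (g : BFunc n) (X : BMat m n) : Bool := f (gRows g X)

/-- A Boolean function is non-constant. -/
def NonConst {k : ℕ} (f : BFunc k) : Prop := (∃ x, f x = true) ∧ (∃ x, f x = false)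

/-- A Boolean function on `n` bits is balanced if it has exactly `2^(n-1)` ones. -/
def IsBalanced {n : ℕ} (g : BFunc n) : Prop := {x | g x = true}.ncard = 2 ^ (n - 1)

/-- The set `V₀` of balanced functions. -/
def BalancedFuncs (n : ℕ) : Set (BFunc n) := {g | IsBalanced g}

/-- The set of matrices `X` with `g(X) = a`. -/
def ginv {m n : ℕ} (g : BFunc n) (a : Fin m → Bool) : Set (BMat m n) := {X | gRows g X = a}

/-! ### De Morgan formulas and formula complexity -/

/-- De Morgan formulas over `m` variables: leaves are literals, gates are AND/OR. -/
inductive DMF (m : ℕ) : Type where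
  | lit (i : Fin m) (pos : Bool)
  | and (l r : DMF m)
  | or (l r : DMF m)

namespace DMF

/-- Size of a formula: its number of leaves. -/
def size {m : ℕ} : DMF m → ℕ
  | lit _ _ => 1
  | and l r => l.size + r.size
  | or l r => l.size + r.size

/-- Evaluation of a formula. -/
def eval {m : ℕ} : DMF m → (Fin m → Bool) → Bool
  | lit i pos, x => if pos then x i else !(x i)
  | and l r, x => l.eval x && r.eval x
  | or l r, x => l.eval x || r.eval x

end DMF

/-- `L(f)`: the minimal size of a de Morgan formula computing `f`. -/
noncomputable def Lfun {m : ℕ} (f : BFunc m) : ℕ :=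
  sInf {s | ∃ φ : DMF m, φ.size = s ∧ ∀ x, φ.eval x = f x}

/-- `L(A × B)`: the minimal size of a de Morgan formula separating `A` from `B`
(`0` if `A` or `B` is empty). -/
noncomputable def Lrect {m : ℕ} (A B : Set (Fin m → Bool)) : ℕ :=
  open Classical in
  if A.Nonempty ∧ B.Nonempty then
    sInf {s | ∃ φ : DMF m, φ.size = s ∧
      (∀ a ∈ A, φ.eval a = true) ∧ (∀ b ∈ B, φ.eval b = false)}
  else 0

/-! ### Deterministic communication protocols -/

/-- A deterministic communication protocol tree: at each internal vertex the
indicated player sends a bit determined by her input. -/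
inductive Prot (X Y O : Type) : Type where
  | leaf (o : O)
  | alice (s : X → Bool) (c : Bool → Prot X Y O)
  | bob (s : Y → Bool) (c : Bool → Prot X Y O)

namespace Prot

variable {X Y O : Type}

/-- Depth of a protocol tree. -/
def depth : Prot X Y O → ℕ
  | leaf _ => 0
  | alice _ c => 1 + max (c false).depth (c true).depth
  | bob _ c => 1 + max (c false).depth (c true).depth

/-- Running a protocol on a pair of inputs. -/
def run : Prot X Y O → X → Y → O
  | leaf o, _, _ => o
  | alice s c, x, y => (c (s x)).run x y
  | bob s c, x, y => (c (s y)).run x y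

/-- A protocol solves a relation if on every input pair it outputs a valid solution. -/
def Solves (p : Prot X Y O) (R : X → Y → O → Prop) : Prop :=
  ∀ x y, R x y (p.run x y)

/-- Alice's input `x` is consistent with the transcript `tr`. -/
def ConsA : Prot X Y O → List Bool → X → Prop
  | _, [], _ => True
  | leaf _, _ :: _, _ => False
  | alice s c, b :: tr, x => s x = b ∧ ConsA (c b) tr x
  | bob _ c, b :: tr, x => ConsA (c b) tr x

/-- Bob's input `y` is consistent with the transcript `tr`. -/
def ConsB : Prot X Y O → List Bool → Y → Prop
  | _, [], _ => True
  | leaf _, _ :: _, _ => False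
  | alice _ c, b :: tr, y => ConsB (c b) tr y
  | bob s c, b :: tr, y => s y = b ∧ ConsB (c b) tr y

/-- `tr` is a (possibly partial) transcript of `p`: each player has a consistent input. -/
def IsTranscript (p : Prot X Y O) (tr : List Bool) : Prop :=
  (∃ x, ConsA p tr x) ∧ (∃ y, ConsB p tr y)

end Prot

/-- `C(R)`: the deterministic communication complexity of a relation. -/
noncomputable def CC {X Y O : Type} (R : X → Y → O → Prop) : ℕ :=
  sInf {d | ∃ p : Prot X Y O, p.Solves R ∧ p.depth = d}

/-! ### Karchmer–Wigderson compositions and multiplexor compositions -/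

/-- The relation `KW_f ⋄ KW_g`. -/
def KWdiam {m n : ℕ} (f : BFunc m) (g : BFunc n) :
    {X : BMat m n // compFG f g X = true} → {Y : BMat m n // compFG f g Y = false} →
      Fin m × Fin n → Prop :=
  fun X Y o => X.1 o.1 o.2 ≠ Y.1 o.1 o.2

/-- The strong composition `KW_f ⊛ KW_g`. -/
def KWstrong {m n : ℕ} (f : BFunc m) (g : BFunc n) :
    {X : BMat m n // compFG f g X = true} → {Y : BMat m n // compFG f g Y = false} →
      Fin m × Fin n → Prop :=
  fun X Y o => X.1 o.1 o.2 ≠ Y.1 o.1 o.2 ∧ g (X.1 o.1) ≠ g (Y.1 o.1)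

/-- Alice's inputs in the multiplexor compositions: a function `g` and a matrix `X`
with `(f ⋄ g)(X) = 1`. -/
def AliceMux (m n : ℕ) (f : BFunc m) : Type :=
  {p : BFunc n × BMat m n // compFG f p.1 p.2 = true}

/-- Bob's inputs in the multiplexor compositions. -/
def BobMux (m n : ℕ) (f : BFunc m) : Type :=
  {p : BFunc n × BMat m n // compFG f p.1 p.2 = false}

/-- The relation `KW_f ⋄ MUX_n` (output `none` plays the role of `⊥`). -/
def MuxDiam {m n : ℕ} (f : BFunc m) :
    AliceMux m n f → BobMux m n f → Option (Fin m × Fin n) → Prop :=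
  fun x y o =>
    match o with
    | none => x.1.1 ≠ y.1.1
    | some (i, j) => x.1.2 i j ≠ y.1.2 i j

/-- The strong multiplexor composition `KW_f ⊛ MUX_n`. -/
def MuxStrong {m n : ℕ} (f : BFunc m) :
    AliceMux m n f → BobMux m n f → Option (Fin m × Fin n) → Prop :=
  fun x y o =>
    match o with
    | none => x.1.1 ≠ y.1.1
    | some (i, j) => x.1.2 i j ≠ y.1.2 i j ∧ x.1.1 (x.1.2 i) ≠ y.1.1 (y.1.2 i)

/-- The function part of Alice's multiplexor input. -/
def muxGA {m n : ℕ} {f : BFunc m} (x : AliceMux m n f) : BFunc n := x.1.1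

/-- The function part of Bob's multiplexor input. -/
def muxGB {m n : ℕ} {f : BFunc m} (y : BobMux m n f) : BFunc n := y.1.1

/-! ### Half-duplex protocols with adversary -/

/-- One player's tree in a half-duplex protocol: at each internal vertex, the
player's input determines whether she sends a bit (`some b`) or receives (`none`);
the four children are indexed by (isSend, bit). -/
inductive HDTree (X O : Type) : Type where
  | leaf (o : O)
  | node (act : X → Option Bool) (child : Bool → Bool → HDTree X O)

namespace HDTree

variable {X O : Type}

/-- The tree is full of depth `d`: every leaf is at distance exactly `d` from the root. -/
inductive IsFull : HDTree X O → ℕ → Prop where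
  | leaf (o : O) : IsFull (leaf o) 0
  | node {act : X → Option Bool} {child : Bool → Bool → HDTree X O} {d : ℕ}
      (h : ∀ s b, IsFull (child s b) d) : IsFull (node act child) (d + 1)

/-- The input `x` is consistent with the transcript `tr`: there is a vertex at
depth `|tr|` reachable on `x` along edges labeled `send(trᵢ)` or `receive(trᵢ)`. -/
def Cons : HDTree X O → List Bool → X → Prop
  | _, [], _ => True
  | leaf _, _ :: _, _ => False
  | node act child, b :: tr, x =>
      match act x with
      | some c => c = b ∧ Cons (child true b) tr x
      | none => Cons (child false b) tr x

end HDTree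

/-- One round of a half-duplex execution; `ab` are the bits delivered by the
adversary in case the round is silent. -/
def hdStep {X Y O : Type} (tA : HDTree X O) (tB : HDTree Y O) (x : X) (y : Y)
    (ab : Bool × Bool) : HDTree X O × HDTree Y O :=
  match tA, tB with
  | HDTree.node actA chA, HDTree.node actB chB =>
      ⟨match actA x with
        | some b => chA true b
        | none => chA false ((actB y).getD ab.1),
       match actB y with
        | some b => chB true b
        | none => chB false ((actA x).getD ab.2)⟩
  | tA, tB => (tA, tB)

/-- Running a half-duplex execution for `d` rounds against the adversary `adv`. -/
def hdRun {X Y O : Type} :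
    ℕ → (ℕ → Bool × Bool) → HDTree X O → HDTree Y O → X → Y → HDTree X O × HDTree Y O
  | 0, _, tA, tB, _, _ => (tA, tB)
  | d + 1, adv, tA, tB, x, y =>
      hdRun d (fun i => adv (i + 1)) (hdStep tA tB x y (adv 0)).1 (hdStep tA tB x y (adv 0)).2 x y

/-- The current round is classical: exactly one of the players sends. -/
def ClassicalRound {X Y O : Type} (tA : HDTree X O) (tB : HDTree Y O) (x : X) (y : Y) : Prop :=
  match tA, tB with
  | HDTree.node actA _, HDTree.node actB _ => (actA x).isSome ≠ (actB y).isSome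
  | _, _ => True

/-- All rounds of the `d`-round execution on `(x, y)` against `adv` are classical. -/
def AllClassical {X Y O : Type} :
    ℕ → (ℕ → Bool × Bool) → HDTree X O → HDTree Y O → X → Y → Prop
  | 0, _, _, _, _, _ => True
  | d + 1, adv, tA, tB, x, y =>
      ClassicalRound tA tB x y ∧
        AllClassical d (fun i => adv (i + 1)) (hdStep tA tB x y (adv 0)).1
          (hdStep tA tB x y (adv 0)).2 x y

/-- A half-duplex protocol of depth `d`: a pair of full 4-ary trees of depth `d`. -/
structure HDProt (X Y O : Type) (d : ℕ) where
  alice : HDTree X O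
  bob : HDTree Y O
  fullA : alice.IsFull d
  fullB : bob.IsFull d

namespace HDProt

variable {X Y O : Type} {d : ℕ}

/-- The protocol solves the relation `R`: in every execution against every adversary,
both players reach leaves labeled with a common output that is valid for the inputs. -/
def Solves (P : HDProt X Y O d) (R : X → Y → O → Prop) : Prop :=
  ∀ x y adv, ∃ o : O,
    (hdRun d adv P.alice P.bob x y).1 = HDTree.leaf o ∧
    (hdRun d adv P.alice P.bob x y).2 = HDTree.leaf o ∧ R x y o

/-- The protocol is partially half-duplex with respect to the function parts
`gA`, `gB` of the inputs: when `gA x = gB y`, all rounds are classical. -/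
def PartiallyHD {G : Type} (P : HDProt X Y O d) (gA : X → G) (gB : Y → G) : Prop :=
  ∀ x y adv, gA x = gB y → AllClassical d adv P.alice P.bob x y

/-- `tr` is a (possibly partial) transcript of `P`. -/
def IsTranscript (P : HDProt X Y O d) (tr : List Bool) : Prop :=
  (∃ x, P.alice.Cons tr x) ∧ (∃ y, P.bob.Cons tr y)

end HDProt

/-- Partially half-duplex communication complexity of a relation whose inputs carry
function parts `gA`, `gB`. -/
noncomputable def Cphd {X Y O G : Type} (R : X → Y → O → Prop)
    (gA : X → G) (gB : Y → G) : ℕ :=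
  sInf {d | ∃ P : HDProt X Y O d, P.Solves R ∧ P.PartiallyHD gA gB}

/-! ### Transcript sets for multiplexor protocols (half-duplex version) -/

section MuxSetsHD

variable {m n : ℕ} {f : BFunc m} {O : Type} {d : ℕ}

/-- `X_π(g)`: the matrices `X` such that Alice's input `(g, X)` is consistent with `tr`. -/
def XpiHD (P : HDProt (AliceMux m n f) (BobMux m n f) O d) (tr : List Bool)
    (g : BFunc n) : Set (BMat m n) :=
  {X | ∃ h : compFG f g X = true, P.alice.Cons tr ⟨(g, X), h⟩}

/-- `Y_π(g)`: the matrices `Y` such that Bob's input `(g, Y)` is consistent with `tr`. -/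
def YpiHD (P : HDProt (AliceMux m n f) (BobMux m n f) O d) (tr : List Bool)
    (g : BFunc n) : Set (BMat m n) :=
  {Y | ∃ h : compFG f g Y = false, P.bob.Cons tr ⟨(g, Y), h⟩}

/-- `A_π(g)`: the strings `a ∈ f⁻¹(1)` with `X_π(g, a) ≠ ∅`. -/
def ApiHD (P : HDProt (AliceMux m n f) (BobMux m n f) O d) (tr : List Bool)
    (g : BFunc n) : Set (Fin m → Bool) :=
  {a | f a = true ∧ (XpiHD P tr g ∩ ginv g a).Nonempty}

/-- `B_π(g)`: the strings `b ∈ f⁻¹(0)` with `Y_π(g, b) ≠ ∅`. -/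
def BpiHD (P : HDProt (AliceMux m n f) (BobMux m n f) O d) (tr : List Bool)
    (g : BFunc n) : Set (Fin m → Bool) :=
  {b | f b = false ∧ (YpiHD P tr g ∩ ginv g b).Nonempty}

/-- `V_π` (version via nonempty `X_π(g)` and `Y_π(g)`). -/
def VpiHD (P : HDProt (AliceMux m n f) (BobMux m n f) O d) (tr : List Bool) :
    Set (BFunc n) :=
  {g | (XpiHD P tr g).Nonempty ∧ (YpiHD P tr g).Nonempty}

/-- `V_π` (version via nonempty `A_π(g)` and `B_π(g)`). -/
def VpiABHD (P : HDProt (AliceMux m n f) (BobMux m n f) O d) (tr : List Bool) :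
    Set (BFunc n) :=
  {g | (ApiHD P tr g).Nonempty ∧ (BpiHD P tr g).Nonempty}

/-- A transcript `tr` of `P` is `γ`-alive (with the universal constant `κ = 8`). -/
def AliveHD (γ : ℝ) (P : HDProt (AliceMux m n f) (BobMux m n f) O d)
    (tr : List Bool) : Prop :=
  P.IsTranscript tr ∧
  ∃ V : Set (BFunc n), V ⊆ VpiABHD P tr ∧ (∀ g ∈ V, IsBalanced g) ∧
    ((2 : ℝ) ^ (-(m : ℝ)) * ((BalancedFuncs n).ncard : ℝ) ≤ (V.ncard : ℝ)) ∧
    (∀ g ∈ V,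
      (1 - γ) * m + 8 * Real.logb 2 m + 8 ≤
        Real.logb 2 (Lrect (ApiHD P tr g) (BpiHD P tr g))) ∧
    (∀ g ∈ V, ∀ a ∈ ApiHD P tr g,
      (2 : ℝ) ^ (-γ * m + 1) * ((ginv g a).ncard : ℝ) ≤
        ((XpiHD P tr g ∩ ginv g a).ncard : ℝ)) ∧
    (∀ g ∈ V, ∀ b ∈ BpiHD P tr g,
      (2 : ℝ) ^ (-γ * m + 1) * ((ginv g b).ncard : ℝ) ≤
        ((YpiHD P tr g ∩ ginv g b).ncard : ℝ))

/-- The weak intersection property for two functions `gA`, `gB`. -/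
def WeakIntersectHD (P : HDProt (AliceMux m n f) (BobMux m n f) O d) (tr : List Bool)
    (gA gB : BFunc n) : Prop :=
  ∃ X ∈ XpiHD P tr gA, ∃ Y ∈ YpiHD P tr gB,
    ∀ i : Fin m, gA (X i) ≠ gB (Y i) → X i = Y i

/-- The characteristic graph of `tr` for `KW_f ⋄ MUX_n`, on vertex set `V`. -/
def charGraphDiamHD (P : HDProt (AliceMux m n f) (BobMux m n f) O d) (tr : List Bool)
    (V : Set (BFunc n)) : SimpleGraph ↥V where
  Adj gA gB := gA ≠ gB ∧
    ((XpiHD P tr ↑gA ∩ YpiHD P tr ↑gB).Nonempty ∨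
      (XpiHD P tr ↑gB ∩ YpiHD P tr ↑gA).Nonempty)
  symm := by
    constructor
    rintro a b ⟨hne, h⟩
    exact ⟨hne.symm, h.symm⟩
  loopless := by
    constructor
    rintro a ⟨hne, -⟩
    exact hne rfl

/-- The characteristic graph of `tr` for `KW_f ⊛ MUX_n`, on vertex set `V`. -/
def charGraphStrongHD (P : HDProt (AliceMux m n f) (BobMux m n f) O d) (tr : List Bool)
    (V : Set (BFunc n)) : SimpleGraph ↥V where
  Adj gA gB := gA ≠ gB ∧
    (WeakIntersectHD P tr ↑gA ↑gB ∨ WeakIntersectHD P tr ↑gB ↑gA)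
  symm := by
    constructor
    rintro a b ⟨hne, h⟩
    exact ⟨hne.symm, h.symm⟩
  loopless := by
    constructor
    rintro a ⟨hne, -⟩
    exact hne rfl

end MuxSetsHD

/-! ### Transcript sets for multiplexor protocols (standard deterministic version) -/

section MuxSetsP

variable {m n : ℕ} {f : BFunc m} {O : Type}

/-- `X_π(g)` for a standard deterministic protocol. -/
def XpiP (p : Prot (AliceMux m n f) (BobMux m n f) O) (tr : List Bool)
    (g : BFunc n) : Set (BMat m n) :=
  {X | ∃ h : compFG f g X = true, Prot.ConsA p tr ⟨(g, X), h⟩}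

/-- `Y_π(g)` for a standard deterministic protocol. -/
def YpiP (p : Prot (AliceMux m n f) (BobMux m n f) O) (tr : List Bool)
    (g : BFunc n) : Set (BMat m n) :=
  {Y | ∃ h : compFG f g Y = false, Prot.ConsB p tr ⟨(g, Y), h⟩}

/-- `A_π(g)` for a standard deterministic protocol. -/
def ApiP (p : Prot (AliceMux m n f) (BobMux m n f) O) (tr : List Bool)
    (g : BFunc n) : Set (Fin m → Bool) :=
  {a | f a = true ∧ (XpiP p tr g ∩ ginv g a).Nonempty}

/-- `B_π(g)` for a standard deterministic protocol. -/
def BpiP (p : Prot (AliceMux m n f) (BobMux m n f) O) (tr : List Bool)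
    (g : BFunc n) : Set (Fin m → Bool) :=
  {b | f b = false ∧ (YpiP p tr g ∩ ginv g b).Nonempty}

/-- `V_π` (version via nonempty `X_π(g)` and `Y_π(g)`), standard protocols. -/
def VpiPset (p : Prot (AliceMux m n f) (BobMux m n f) O) (tr : List Bool) :
    Set (BFunc n) :=
  {g | (XpiP p tr g).Nonempty ∧ (YpiP p tr g).Nonempty}

/-- `V_π` (version via nonempty `A_π(g)` and `B_π(g)`), standard protocols. -/
def VpiABP (p : Prot (AliceMux m n f) (BobMux m n f) O) (tr : List Bool) :
    Set (BFunc n) :=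
  {g | (ApiP p tr g).Nonempty ∧ (BpiP p tr g).Nonempty}

/-- `γ`-alive transcripts (with `κ = 8`), standard protocols. -/
def AliveP (γ : ℝ) (p : Prot (AliceMux m n f) (BobMux m n f) O)
    (tr : List Bool) : Prop :=
  p.IsTranscript tr ∧
  ∃ V : Set (BFunc n), V ⊆ VpiABP p tr ∧ (∀ g ∈ V, IsBalanced g) ∧
    ((2 : ℝ) ^ (-(m : ℝ)) * ((BalancedFuncs n).ncard : ℝ) ≤ (V.ncard : ℝ)) ∧
    (∀ g ∈ V,
      (1 - γ) * m + 8 * Real.logb 2 m + 8 ≤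
        Real.logb 2 (Lrect (ApiP p tr g) (BpiP p tr g))) ∧
    (∀ g ∈ V, ∀ a ∈ ApiP p tr g,
      (2 : ℝ) ^ (-γ * m + 1) * ((ginv g a).ncard : ℝ) ≤
        ((XpiP p tr g ∩ ginv g a).ncard : ℝ)) ∧
    (∀ g ∈ V, ∀ b ∈ BpiP p tr g,
      (2 : ℝ) ^ (-γ * m + 1) * ((ginv g b).ncard : ℝ) ≤
        ((YpiP p tr g ∩ ginv g b).ncard : ℝ))

/-- The weak intersection property, standard protocols. -/
def WeakIntersectP (p : Prot (AliceMux m n f) (BobMux m n f) O) (tr : List Bool)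
    (gA gB : BFunc n) : Prop :=
  ∃ X ∈ XpiP p tr gA, ∃ Y ∈ YpiP p tr gB,
    ∀ i : Fin m, gA (X i) ≠ gB (Y i) → X i = Y i

/-- The characteristic graph for `KW_f ⋄ MUX_n`, standard protocols. -/
def charGraphDiamP (p : Prot (AliceMux m n f) (BobMux m n f) O) (tr : List Bool)
    (V : Set (BFunc n)) : SimpleGraph ↥V where
  Adj gA gB := gA ≠ gB ∧
    ((XpiP p tr ↑gA ∩ YpiP p tr ↑gB).Nonempty ∨
      (XpiP p tr ↑gB ∩ YpiP p tr ↑gA).Nonempty)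
  symm := by
    constructor
    rintro a b ⟨hne, h⟩
    exact ⟨hne.symm, h.symm⟩
  loopless := by
    constructor
    rintro a ⟨hne, -⟩
    exact hne rfl

/-- The characteristic graph for `KW_f ⊛ MUX_n`, standard protocols. -/
def charGraphStrongP (p : Prot (AliceMux m n f) (BobMux m n f) O) (tr : List Bool)
    (V : Set (BFunc n)) : SimpleGraph ↥V where
  Adj gA gB := gA ≠ gB ∧
    (WeakIntersectP p tr ↑gA ↑gB ∨ WeakIntersectP p tr ↑gB ↑gA)
  symm := by
    constructor
    rintro a b ⟨hne, h⟩
    exact ⟨hne.symm, h.symm⟩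
  loopless := by
    constructor
    rintro a ⟨hne, -⟩
    exact hne rfl

end MuxSetsP

/-! ### Prefix-thick sets, branching structures and winning sets -/

/-- A set of strings indexed by a linearly ordered set `I` is prefix thick with
degree `t`: it has a nonempty subset whose prefix tree has minimum degree
greater than `t` (the children of the depth-`i` vertex given by the prefix of
`x ∈ S'` are the possible values of the next coordinate among elements of `S'`
agreeing with `x` on all earlier coordinates). -/
def RowThick {I A : Type} [LT I] (S : Set (I → A)) (t : ℝ) : Prop :=
  ∃ S' : Set (I → A), S' ⊆ S ∧ S'.Nonempty ∧ ∀ x ∈ S', ∀ i : I,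
    t < (({a : A | ∃ y ∈ S', (∀ j, j < i → y j = x j) ∧ y i = a}).ncard : ℝ)

/-- Prefix thickness for strings over (possibly different) alphabets `A i`,
with a separate degree bound `t i` at each depth. -/
def DepThick {m : ℕ} {A : Fin m → Type} (S : Set (∀ i, A i)) (t : Fin m → ℝ) : Prop :=
  ∃ S' : Set (∀ i, A i), S' ⊆ S ∧ S'.Nonempty ∧ ∀ x ∈ S', ∀ i : Fin m,
    t i < (({a : A i | ∃ y ∈ S', (∀ j, j < i → y j = x j) ∧ y i = a}).ncard : ℝ)

/-- The restriction of a set of matrices to the rows in `I` (ordered as in `[m]`). -/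
def restrictRows {m n : ℕ} (I : Finset (Fin m)) (S : Set (BMat m n)) :
    Set (↥I → (Fin n → Bool)) :=
  (fun X => fun i : ↥I => X i.1) '' S

/-- The restriction of a set of strings to the coordinates in `I` (ordered as in `[m]`). -/
def restrictStr {m : ℕ} {A : Type} (I : Finset (Fin m)) (S : Set (Fin m → A)) :
    Set (↥I → A) :=
  (fun x => fun i : ↥I => x i.1) '' S

/-- `w` is a branching structure of `S`: some nonempty subset `S' ⊆ S` has a prefix
tree in which every vertex at depth `i` has exactly `w i` children. -/
def IsBranching {m : ℕ} {A : Type} (S : Set (Fin m → A)) (w : Fin m → ℕ) : Prop :=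
  ∃ S' : Set (Fin m → A), S' ⊆ S ∧ S'.Nonempty ∧ ∀ x ∈ S', ∀ i : Fin m,
    ({a : A | ∃ y ∈ S', (∀ j, j < i → y j = x j) ∧ y i = a}).ncard = w i

/-- The winning set of `S`: the set of its branching structures. -/
def WinSet {m : ℕ} {A : Type} (S : Set (Fin m → A)) : Set (Fin m → ℕ) :=
  {w | IsBranching S w}

/-! ### Non-deterministic communication complexity -/

/-- There is a non-deterministic protocol for the total function `f` with
witness set of size `k`. -/
def NDProtFor {X Y : Type} (f : X × Y → Bool) (k : ℕ) : Prop :=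
  ∃ a : X → Fin k → Bool, ∃ b : Y → Fin k → Bool,
    ∀ x y, f (x, y) = true ↔ ∃ w, a x w = true ∧ b y w = true

/-- The minimal size of a (nonempty) witness set of a non-deterministic protocol for `f`;
the non-deterministic communication complexity `NCC(f)` is its base-2 logarithm. -/
noncomputable def NCCcard {X Y : Type} (f : X × Y → Bool) : ℕ :=
  sInf {k | 1 ≤ k ∧ NDProtFor f k}

/-- A non-deterministic protocol for the partial problem `GraphIneq_G` with witness
set of size `k`: adjacent pairs are accepted, equal pairs are rejected. -/
def GraphIneqProt {V : Type} (G : SimpleGraph V) (k : ℕ) : Prop :=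
  ∃ a : V → Fin k → Bool, ∃ b : V → Fin k → Bool,
    (∀ u v, G.Adj u v → ∃ w, a u w = true ∧ b v w = true) ∧
    (∀ v, ¬ ∃ w, a v w = true ∧ b v w = true)

/-- The minimal witness-set size of a non-deterministic protocol for `GraphIneq_G`;
`NCC(GraphIneq_G)` is its base-2 logarithm. -/
noncomputable def NCCgraphIneqCard {V : Type} (G : SimpleGraph V) : ℕ :=
  sInf {k | 1 ≤ k ∧ GraphIneqProt G k}

/-- `S` is an independent set of `G`. -/
def IndepIn {V : Type} (G : SimpleGraph V) (S : Set V) : Prop :=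
  ∀ u ∈ S, ∀ v ∈ S, ¬ G.Adj u v

namespace KWAux

open Prot

/-! ### Generic protocol utilities -/

variable {X Y O : Type}

/-- Alice announces the bits of a finite function, one coordinate at a time. -/
def talkA {ι : Type} [DecidableEq ι] : List ι → (ι → Bool) → (X → ι → Bool) → ((ι → Bool) → Prot X Y O) → Prot X Y O
  | [], acc, _, k => k acc
  | i :: l, acc, bits, k =>
      .alice (fun x => bits x i) (fun b => talkA l (Function.update acc i b) bits k)

def talkB {ι : Type} [DecidableEq ι] : List ι → (ι → Bool) → (Y → ι → Bool) → ((ι → Bool) → Prot X Y O) → Prot X Y O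
  | [], acc, _, k => k acc
  | i :: l, acc, bits, k =>
      .bob (fun y => bits y i) (fun b => talkB l (Function.update acc i b) bits k)

lemma run_talkA {ι : Type} [DecidableEq ι] (l : List ι) (acc : ι → Bool) (bits : X → ι → Bool)
    (k : (ι → Bool) → Prot X Y O) (x : X) (y : Y) :
    (talkA l acc bits k).run x y = (k (fun i => if i ∈ l then bits x i else acc i)).run x y := by
  induction l generalizing acc with
  | nil => simp [talkA]
  | cons i l ih =>
      rw [talkA, Prot.run, ih]
      have : (fun j => if j ∈ l then bits x j else Function.update acc i (bits x i) j)
          = (fun j => if j ∈ i :: l then bits x j else acc j) := by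
        funext j
        by_cases hl : j ∈ l <;> by_cases hj : j = i <;>
          simp [hl, hj, Function.update]
      rw [this]

lemma run_talkB {ι : Type} [DecidableEq ι] (l : List ι) (acc : ι → Bool) (bits : Y → ι → Bool)
    (k : (ι → Bool) → Prot X Y O) (x : X) (y : Y) :
    (talkB l acc bits k).run x y = (k (fun i => if i ∈ l then bits y i else acc i)).run x y := by
  induction l generalizing acc with
  | nil => simp [talkB]
  | cons i l ih =>
      rw [talkB, Prot.run, ih]
      have : (fun j => if j ∈ l then bits y j else Function.update acc i (bits y i) j)
          = (fun j => if j ∈ i :: l then bits y j else acc j) := by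
        funext j
        by_cases hl : j ∈ l <;> by_cases hj : j = i <;>
          simp [hl, hj, Function.update]
      rw [this]

lemma if_mem_all {ι α : Type} [DecidableEq ι] (l : List ι) (hl : ∀ i, i ∈ l) (F G : ι → α) :
    (fun i => if i ∈ l then F i else G i) = F := by
  funext i; simp [hl i]

/-- A total relation on pairs of boolean matrices has a (trivial, full-information)
deterministic protocol. -/
lemma exists_solving_prot {m n : ℕ} {px py : BMat m n → Prop}
    (R : BMat m n → BMat m n → Fin m × Fin n → Prop) (o₀ : Fin m × Fin n)
    (htot : ∀ U V, px U → py V → ∃ o, R U V o) :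
    ∃ p : Prot {U // px U} {V // py V} (Fin m × Fin n),
      p.Solves (fun x y o => R x.1 y.1 o) := by
  classical
  set pick : BMat m n → BMat m n → Fin m × Fin n :=
    fun U V => if h : ∃ o, R U V o then h.choose else o₀ with hpick
  set eL : List (Fin m × Fin n) := (Finset.univ : Finset (Fin m × Fin n)).toList with heL
  set toM : (Fin m × Fin n → Bool) → BMat m n := fun f i j => f (i, j) with htoM
  refine ⟨talkA eL (fun _ => false) (fun x q => x.1 q.1 q.2)
    (fun fx => talkB eL (fun _ => false) (fun y q => y.1 q.1 q.2)
      (fun fy => .leaf (pick (toM fx) (toM fy)))), ?_⟩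
  intro x y
  have hmem : ∀ q : Fin m × Fin n, q ∈ eL := by
    intro q; rw [heL]; exact Finset.mem_toList.mpr (Finset.mem_univ q)
  rw [run_talkA, run_talkB]
  show R x.1 y.1 _
  rw [Prot.run,
    if_mem_all eL hmem (fun q : Fin m × Fin n => (x : BMat m n) q.1 q.2) (fun _ => false),
    if_mem_all eL hmem (fun q : Fin m × Fin n => (y : BMat m n) q.1 q.2) (fun _ => false)]
  have hx : toM (fun q => (x : BMat m n) q.1 q.2) = (x : BMat m n) := rfl
  have hy : toM (fun q => (y : BMat m n) q.1 q.2) = (y : BMat m n) := rfl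
  rw [hx, hy, hpick]
  have h : ∃ o, R x.1 y.1 o := htot _ _ x.2 y.2
  simp only [dif_pos h]
  exact h.choose_spec

/-- Extract a minimal-depth protocol realizing `CC R`. -/
lemma exists_CC_prot {X Y O : Type} (R : X → Y → O → Prop)
    (h : ∃ p : Prot X Y O, p.Solves R) :
    ∃ p : Prot X Y O, p.Solves R ∧ p.depth = CC R := by
  obtain ⟨p, hp⟩ := h
  have hne : {d | ∃ p : Prot X Y O, p.Solves R ∧ p.depth = d}.Nonempty :=
    ⟨p.depth, p, hp, rfl⟩
  obtain ⟨q, hq, hd⟩ := Nat.sInf_mem hne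
  exact ⟨q, hq, hd⟩

open Classical in
/-- Extending a protocol over subtypes to a protocol over the ambient types. -/
noncomputable def extendP {px : X → Prop} {py : Y → Prop} :
    Prot {x // px x} {y // py y} O → Prot X Y O
  | .leaf o => .leaf o
  | .alice s c => .alice (fun x => if h : px x then s ⟨x, h⟩ else false) (fun b => extendP (c b))
  | .bob s c => .bob (fun y => if h : py y then s ⟨y, h⟩ else false) (fun b => extendP (c b))

lemma depth_extendP {px : X → Prop} {py : Y → Prop} (p : Prot {x // px x} {y // py y} O) :
    (extendP p).depth = p.depth := by
  induction p with
  | leaf o => rfl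
  | alice s c ih => simp [extendP, Prot.depth, ih]
  | bob s c ih => simp [extendP, Prot.depth, ih]

lemma run_extendP {px : X → Prop} {py : Y → Prop} (p : Prot {x // px x} {y // py y} O)
    {x : X} {y : Y} (hx : px x) (hy : py y) :
    (extendP p).run x y = p.run ⟨x, hx⟩ ⟨y, hy⟩ := by
  induction p with
  | leaf o => rfl
  | alice s c ih => simp [extendP, Prot.run, dif_pos hx, ih]
  | bob s c ih => simp [extendP, Prot.run, dif_pos hy, ih]

end KWAux


namespace KWAux

/-! ### Bit encodings -/

def bitsOf : ℕ → ℕ → List Bool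
  | _, 0 => []
  | v, t+1 => (decide (v % 2 = 1)) :: bitsOf (v / 2) t

def bval : List Bool → ℕ
  | [] => 0
  | b :: l => (if b then 1 else 0) + 2 * bval l

lemma length_bitsOf (v t : ℕ) : (bitsOf v t).length = t := by
  induction t generalizing v with
  | zero => rfl
  | succ t ih => simp [bitsOf, ih]

lemma bval_bitsOf (t v : ℕ) (h : v < 2 ^ t) : bval (bitsOf v t) = v := by
  induction t generalizing v with
  | zero => interval_cases v; rfl
  | succ t ih =>
      have hv : v / 2 < 2 ^ t := by
        rw [Nat.div_lt_iff_lt_mul (by norm_num)]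
        calc v < 2 ^ (t+1) := h
        _ = 2 ^ t * 2 := by ring
      rw [bitsOf, bval, ih _ hv]
      rcases Nat.mod_two_eq_zero_or_one v with h2 | h2 <;> simp [h2] <;> omega

def listOf (k : ℕ) (f : ℕ → Bool) : List Bool := (List.range k).map f

lemma listOf_succ (k : ℕ) (f : ℕ → Bool) :
    listOf (k + 1) f = f 0 :: listOf k (fun i => f (i + 1)) := by
  simp [listOf, List.range_succ_eq_map, Function.comp]

lemma listOf_getD (l : List Bool) : listOf l.length (fun i => l.getD i false) = l := by
  induction l with
  | nil => rfl
  | cons a l ih =>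
      rw [List.length_cons, listOf_succ]
      simp only [List.getD_cons_zero, List.getD_cons_succ]
      rw [ih]

/-! ### Half-duplex building blocks: a send-phase tree and a receive-phase tree -/

def sendA {X O : Type} : ℕ → (X → ℕ → Bool) → (List Bool → HDTree X O) → HDTree X O
  | 0, _, after => after []
  | k+1, bs, after =>
      .node (fun x => some (bs x 0))
        (fun _ b => sendA k (fun x i => bs x (i + 1)) (fun l => after (b :: l)))

def recvB {Y O : Type} : ℕ → (List Bool → HDTree Y O) → HDTree Y O
  | 0, after => after []
  | k+1, after => .node (fun _ => none) (fun _ b => recvB k (fun l => after (b :: l)))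

lemma isFull_sendA {X O : Type} (k c : ℕ) (bs : X → ℕ → Bool)
    (after : List Bool → HDTree X O) (h : ∀ l, (after l).IsFull c) :
    (sendA k bs after).IsFull (k + c) := by
  induction k generalizing bs after with
  | zero => simpa [sendA] using h []
  | succ k ih =>
      rw [show k + 1 + c = (k + c) + 1 from by omega, sendA]
      exact .node (fun s b => ih _ _ (fun l => h _))

lemma isFull_recvB {Y O : Type} (k c : ℕ)
    (after : List Bool → HDTree Y O) (h : ∀ l, (after l).IsFull c) :
    (recvB k after).IsFull (k + c) := by
  induction k generalizing after with
  | zero => simpa [recvB] using h []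
  | succ k ih =>
      rw [show k + 1 + c = (k + c) + 1 from by omega, recvB]
      exact .node (fun s b => ih _ (fun l => h _))

lemma hdRun_sendA_recvB {X Y O : Type} (k : ℕ) (adv : ℕ → Bool × Bool) (bs : X → ℕ → Bool)
    (aA : List Bool → HDTree X O) (aB : List Bool → HDTree Y O) (x : X) (y : Y) :
    hdRun k adv (sendA k bs aA) (recvB k aB) x y
      = (aA (listOf k (bs x)), aB (listOf k (bs x))) := by
  induction k generalizing adv bs aA aB with
  | zero => simp [sendA, recvB, hdRun, listOf]
  | succ k ih =>
      rw [hdRun]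
      have hstep : hdStep (sendA (k+1) bs aA) (recvB (k+1) aB) x y (adv 0)
          = (sendA k (fun x i => bs x (i+1)) (fun l => aA (bs x 0 :: l)),
             recvB k (fun l => aB (bs x 0 :: l))) := by
        simp [sendA, recvB, hdStep]
      rw [hstep, ih, listOf_succ]

lemma allClassical_sendA_recvB {X Y O : Type} (k : ℕ) (adv : ℕ → Bool × Bool)
    (bs : X → ℕ → Bool) (aA : List Bool → HDTree X O) (aB : List Bool → HDTree Y O)
    (x : X) (y : Y) :
    AllClassical k adv (sendA k bs aA) (recvB k aB) x y := by
  induction k generalizing adv bs aA aB with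
  | zero => trivial
  | succ k ih =>
      refine ⟨by simp [sendA, recvB, ClassicalRound], ?_⟩
      have hstep : hdStep (sendA (k+1) bs aA) (recvB (k+1) aB) x y (adv 0)
          = (sendA k (fun x i => bs x (i+1)) (fun l => aA (bs x 0 :: l)),
             recvB k (fun l => aB (bs x 0 :: l))) := by
        simp [sendA, recvB, hdStep]
      rw [hstep]
      exact ih _ _ _ _

/-! ### Splitting runs -/

lemma hdRun_add {X Y O : Type} (b a : ℕ) (adv : ℕ → Bool × Bool)
    (tA : HDTree X O) (tB : HDTree Y O) (x : X) (y : Y) :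
    hdRun (b + a) adv tA tB x y
      = hdRun b (fun i => adv (i + a)) (hdRun a adv tA tB x y).1
          (hdRun a adv tA tB x y).2 x y := by
  induction a generalizing adv tA tB with
  | zero => rfl
  | succ a ih =>
      rw [show b + (a + 1) = (b + a) + 1 from rfl, hdRun, ih]
      rfl

lemma allClassical_add {X Y O : Type} (b a : ℕ) (adv : ℕ → Bool × Bool)
    (tA : HDTree X O) (tB : HDTree Y O) (x : X) (y : Y)
    (h1 : AllClassical a adv tA tB x y)
    (h2 : AllClassical b (fun i => adv (i + a)) (hdRun a adv tA tB x y).1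
        (hdRun a adv tA tB x y).2 x y) :
    AllClassical (b + a) adv tA tB x y := by
  induction a generalizing adv tA tB with
  | zero => exact h2
  | succ a ih =>
      exact ⟨h1.1, ih _ _ _ h1.2 h2⟩

end KWAux


namespace KWAux

/-! ### Verification phase trees -/

def verifyA {X O : Type} (k : ℕ) (bsF : X → ℕ → Bool) (out : List Bool → Bool → O) :
    HDTree X O :=
  sendA k bsF (fun l => .node (fun _ => none) (fun _ r => .leaf (out l r)))

def verifyB {Y O : Type} (k : ℕ) (check : Y → List Bool → Bool)
    (out : List Bool → Bool → O) : HDTree Y O :=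
  recvB k (fun l => .node (fun y => some (check y l)) (fun _ r => .leaf (out l r)))

lemma isFull_verifyA {X O : Type} (k : ℕ) (bsF : X → ℕ → Bool)
    (out : List Bool → Bool → O) : (verifyA k bsF out).IsFull (1 + k) := by
  rw [Nat.add_comm]
  exact isFull_sendA k 1 _ _ (fun l => .node (fun s b => .leaf _))

lemma isFull_verifyB {Y O : Type} (k : ℕ) (check : Y → List Bool → Bool)
    (out : List Bool → Bool → O) : (verifyB k check out).IsFull (1 + k) := by
  rw [Nat.add_comm]
  exact isFull_recvB k 1 _ (fun l => .node (fun s b => .leaf _))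

lemma hdRun_verify {X Y O : Type} (k : ℕ) (adv : ℕ → Bool × Bool) (bsF : X → ℕ → Bool)
    (check : Y → List Bool → Bool) (out : List Bool → Bool → O) (x : X) (y : Y) :
    hdRun (1 + k) adv (verifyA k bsF out) (verifyB k check out) x y
      = (.leaf (out (listOf k (bsF x)) (check y (listOf k (bsF x)))),
         .leaf (out (listOf k (bsF x)) (check y (listOf k (bsF x))))) := by
  rw [hdRun_add 1 k, verifyA, verifyB, hdRun_sendA_recvB]
  simp [hdRun, hdStep]

lemma allClassical_verify {X Y O : Type} (k : ℕ) (adv : ℕ → Bool × Bool)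
    (bsF : X → ℕ → Bool) (check : Y → List Bool → Bool) (out : List Bool → Bool → O)
    (x : X) (y : Y) :
    AllClassical (1 + k) adv (verifyA k bsF out) (verifyB k check out) x y := by
  refine allClassical_add 1 k adv _ _ x y (allClassical_sendA_recvB k adv bsF _ _ x y) ?_
  rw [verifyA, verifyB, hdRun_sendA_recvB]
  exact ⟨by simp [ClassicalRound], trivial⟩

/-! ### Simulation phase -/

section Sim

variable {X Y U V W O : Type}

def advanceP (b : Bool) : Prot U V W → Prot U V W
  | .leaf o => .leaf o
  | .alice _ c => c b
  | .bob _ c => c b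

def labelP (o₀ : W) : Prot U V W → W
  | .leaf o => o
  | _ => o₀

def actSimA (uA : X → U) (d : ℕ) (st : X → Prot U V W) (x : X) : Option Bool :=
  match st x with
  | .leaf _ => if d % 2 = 0 then some false else none
  | .alice s _ => some (s (uA x))
  | .bob _ _ => none

def actSimB (vB : Y → V) (d : ℕ) (st : Y → Prot U V W) (y : Y) : Option Bool :=
  match st y with
  | .leaf _ => if d % 2 = 0 then none else some false
  | .alice _ _ => none
  | .bob s _ => some (s (vB y))

def simA (uA : X → U) (finA : (X → Prot U V W) → HDTree X O) :
    ℕ → (X → Prot U V W) → HDTree X O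
  | 0, st => finA st
  | d+1, st => .node (actSimA uA d st) (fun _ b => simA uA finA d (fun x => advanceP b (st x)))

def simB (vB : Y → V) (finB : HDTree Y O) : ℕ → (Y → Prot U V W) → HDTree Y O
  | 0, _ => finB
  | d+1, st => .node (actSimB vB d st) (fun _ b => simB vB finB d (fun y => advanceP b (st y)))

lemma isFull_simA (uA : X → U) (finA : (X → Prot U V W) → HDTree X O) (c : ℕ)
    (hfin : ∀ st, (finA st).IsFull c) :
    ∀ d st, (simA uA finA d st).IsFull (d + c) := by
  intro d
  induction d with
  | zero => intro st; simpa [simA] using hfin st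
  | succ d ih =>
      intro st
      rw [show d + 1 + c = (d + c) + 1 from by omega, simA]
      exact .node (fun s b => ih _)

lemma isFull_simB (vB : Y → V) (finB : HDTree Y O) (c : ℕ) (hfin : finB.IsFull c) :
    ∀ (d : ℕ) (st : Y → Prot U V W), (simB vB finB d st).IsFull (d + c) := by
  intro d
  induction d with
  | zero => intro st; simpa [simB] using hfin
  | succ d ih =>
      intro st
      rw [show d + 1 + c = (d + c) + 1 from by omega, simB]
      exact .node (fun s b => ih _)

/-- Progress: on any pair of inputs and any adversary, after the simulation phase both
players are at the start of the verification phase. -/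
lemma simRun_any (uA : X → U) (finA : (X → Prot U V W) → HDTree X O) (finB : HDTree Y O)
    (vB : Y → V) (d : ℕ) (adv : ℕ → Bool × Bool) (stA : X → Prot U V W)
    (stB : Y → Prot U V W) (x : X) (y : Y) :
    ∃ (stA' : X → Prot U V W) (stB' : Y → Prot U V W),
      hdRun d adv (simA uA finA d stA) (simB vB finB d stB) x y
        = (simA uA finA 0 stA', simB vB finB 0 stB') := by
  induction d generalizing adv stA stB with
  | zero => exact ⟨stA, stB, rfl⟩
  | succ d ih =>
      rw [hdRun]
      have hstep : ∃ b1 b2,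
          hdStep (simA uA finA (d+1) stA) (simB vB finB (d+1) stB) x y (adv 0)
            = (simA uA finA d (fun x => advanceP b1 (stA x)),
               simB vB finB d (fun y => advanceP b2 (stB y))) := by
        rcases hA : actSimA uA d stA x with _ | bA <;>
          rcases hB : actSimB vB d stB y with _ | bB
        · exact ⟨(adv 0).1, (adv 0).2, by simp [simA, simB, hdStep, hA, hB]⟩
        · exact ⟨bB, bB, by simp [simA, simB, hdStep, hA, hB]⟩
        · exact ⟨bA, bA, by simp [simA, simB, hdStep, hA, hB]⟩
        · exact ⟨bA, bB, by simp [simA, simB, hdStep, hA, hB]⟩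
      obtain ⟨b1, b2, hstep⟩ := hstep
      rw [hstep]
      exact ih _ _ _

end Sim

end KWAux


namespace KWAux

section Sync

variable {X Y U V W O : Type}

/-- Synchronized run: when both players simulate the same protocol, the execution is
classical and faithfully simulates the protocol. -/
lemma simRun_sync (uA : X → U) (finA : (X → Prot U V W) → HDTree X O) (finB : HDTree Y O)
    (vB : Y → V) (d : ℕ) (adv : ℕ → Bool × Bool) (stA : X → Prot U V W)
    (stB : Y → Prot U V W) (x : X) (y : Y)
    (hsync : stA x = stB y) (hd : (stA x).depth ≤ d) :
    ∃ (stA' : X → Prot U V W) (stB' : Y → Prot U V W),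
      hdRun d adv (simA uA finA d stA) (simB vB finB d stB) x y
        = (simA uA finA 0 stA', simB vB finB 0 stB') ∧
      stA' x = .leaf ((stA x).run (uA x) (vB y)) ∧
      stB' y = .leaf ((stA x).run (uA x) (vB y)) ∧
      AllClassical d adv (simA uA finA d stA) (simB vB finB d stB) x y := by
  induction d generalizing adv stA stB with
  | zero =>
      rcases hstx : stA x with o | ⟨s, c⟩ | ⟨s, c⟩
      · refine ⟨stA, stB, rfl, ?_, ?_, trivial⟩
        · rw [hstx]; rfl
        · rw [← hsync, hstx]; rfl
      · rw [hstx, Prot.depth] at hd; omega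
      · rw [hstx, Prot.depth] at hd; omega
  | succ d ih =>
      have hsty : stB y = stA x := hsync.symm
      rcases hstx : stA x with o | ⟨s, c⟩ | ⟨s, c⟩
      · -- padding round
        rw [hstx] at hsty
        have hstep : ∃ bb : Bool,
            hdStep (simA uA finA (d+1) stA) (simB vB finB (d+1) stB) x y (adv 0)
              = (simA uA finA d (fun x => advanceP bb (stA x)),
                 simB vB finB d (fun y => advanceP bb (stB y))) := by
          by_cases hpar : d % 2 = 0
          · exact ⟨false, by simp [simA, simB, hdStep, actSimA, actSimB, hstx, hsty, hpar]⟩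
          · exact ⟨false, by simp [simA, simB, hdStep, actSimA, actSimB, hstx, hsty, hpar]⟩
        obtain ⟨bb, hstep⟩ := hstep
        have hcl : ClassicalRound (simA uA finA (d+1) stA) (simB vB finB (d+1) stB) x y := by
          by_cases hpar : d % 2 = 0 <;>
            simp [simA, simB, ClassicalRound, actSimA, actSimB, hstx, hsty, hpar]
        obtain ⟨stA', stB', heq, hA, hB, hac⟩ := ih (fun i => adv (i+1))
          (fun x => advanceP bb (stA x)) (fun y => advanceP bb (stB y))
          (by simp only [hstx, hsty]) (by simp [hstx, advanceP, Prot.depth])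
        simp only [hstx, advanceP] at hA hB
        refine ⟨stA', stB', ?_, ?_, ?_, ?_⟩
        · rw [hdRun, hstep]; exact heq
        · exact hA
        · exact hB
        · exact ⟨hcl, by rw [hstep]; exact hac⟩
      · -- Alice speaks
        rw [hstx] at hsty
        have hstep : hdStep (simA uA finA (d+1) stA) (simB vB finB (d+1) stB) x y (adv 0)
            = (simA uA finA d (fun x' => advanceP (s (uA x)) (stA x')),
               simB vB finB d (fun y' => advanceP (s (uA x)) (stB y'))) := by
          simp [simA, simB, hdStep, actSimA, actSimB, hstx, hsty]
        have hcl : ClassicalRound (simA uA finA (d+1) stA) (simB vB finB (d+1) stB) x y := by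
          simp [simA, simB, ClassicalRound, actSimA, actSimB, hstx, hsty]
        have hdep : (advanceP (s (uA x)) (stA x)).depth ≤ d := by
          rw [hstx, Prot.depth] at hd
          rw [hstx]
          rcases hb : s (uA x) <;> simp [advanceP] <;> omega
        obtain ⟨stA', stB', heq, hA, hB, hac⟩ := ih (fun i => adv (i+1))
          (fun x' => advanceP (s (uA x)) (stA x')) (fun y' => advanceP (s (uA x)) (stB y'))
          (by simp only [hstx, hsty]) hdep
        simp only [hstx, advanceP] at hA hB
        refine ⟨stA', stB', ?_, ?_, ?_, ?_⟩
        · rw [hdRun, hstep]; exact heq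
        · exact hA.trans rfl
        · exact hB.trans rfl
        · exact ⟨hcl, by rw [hstep]; exact hac⟩
      · -- Bob speaks
        rw [hstx] at hsty
        have hstep : hdStep (simA uA finA (d+1) stA) (simB vB finB (d+1) stB) x y (adv 0)
            = (simA uA finA d (fun x' => advanceP (s (vB y)) (stA x')),
               simB vB finB d (fun y' => advanceP (s (vB y)) (stB y'))) := by
          simp [simA, simB, hdStep, actSimA, actSimB, hstx, hsty]
        have hcl : ClassicalRound (simA uA finA (d+1) stA) (simB vB finB (d+1) stB) x y := by
          simp [simA, simB, ClassicalRound, actSimA, actSimB, hstx, hsty]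
        have hdep : (advanceP (s (vB y)) (stA x)).depth ≤ d := by
          rw [hstx, Prot.depth] at hd
          rw [hstx]
          rcases hb : s (vB y) <;> simp [advanceP] <;> omega
        obtain ⟨stA', stB', heq, hA, hB, hac⟩ := ih (fun i => adv (i+1))
          (fun x' => advanceP (s (vB y)) (stA x')) (fun y' => advanceP (s (vB y)) (stB y'))
          (by simp only [hstx, hsty]) hdep
        simp only [hstx, advanceP] at hA hB
        refine ⟨stA', stB', ?_, ?_, ?_, ?_⟩
        · rw [hdRun, hstep]; exact heq
        · exact hA.trans rfl
        · exact hB.trans rfl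
        · exact ⟨hcl, by rw [hstep]; exact hac⟩

end Sync

end KWAux


namespace KWAux

/-! ### Encoding an output entry in binary -/

def idxP {m : ℕ} (n : ℕ) (o : Fin m × Fin n) : ℕ := n * o.1.1 + o.2.1

lemma idxP_lt {m n : ℕ} (o : Fin m × Fin n) : idxP n o < m * n := by
  have h1 : o.1.1 + 1 ≤ m := o.1.2
  have h2 : o.2.1 < n := o.2.2
  calc idxP n o < n * o.1.1 + n := by rw [idxP]; omega
  _ = n * (o.1.1 + 1) := by ring
  _ ≤ n * m := Nat.mul_le_mul_left n h1
  _ = m * n := Nat.mul_comm n m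

def decP (m n t : ℕ) : List Bool → Option (Fin m × Fin n) := fun l =>
  if h : bval (List.take t l) < m * n ∧ 0 < n then
    some (⟨bval (List.take t l) / n, (Nat.div_lt_iff_lt_mul h.2).mpr h.1⟩,
      ⟨bval (List.take t l) % n, Nat.mod_lt _ h.2⟩)
  else none

lemma decP_encode {m n t : ℕ} (o : Fin m × Fin n) (rest : List Bool)
    (hpow : m * n ≤ 2 ^ t) :
    decP m n t (bitsOf (idxP n o) t ++ rest) = some o := by
  have hn : 0 < n := o.2.pos
  have hval : bval (List.take t (bitsOf (idxP n o) t ++ rest)) = idxP n o := by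
    rw [List.take_left' (length_bitsOf _ _), bval_bitsOf]
    exact lt_of_lt_of_le (idxP_lt o) hpow
  have hdiv : idxP n o / n = o.1.1 := by
    rw [idxP, Nat.mul_add_div hn, Nat.div_eq_of_lt o.2.2, Nat.add_zero]
  have hmod : idxP n o % n = o.2.1 := by
    rw [idxP, Nat.mul_add_mod, Nat.mod_eq_of_lt o.2.2]
  rw [decP]
  simp only [hval]
  rw [dif_pos ⟨idxP_lt o, hn⟩]
  simp [Prod.ext_iff, Fin.ext_iff, hdiv, hmod]

/-! ### The multiplexor verification gadget -/

section Master

variable {m n : ℕ} {f : BFunc m}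

def outMap (m n t : ℕ) : List Bool → Bool → Option (Fin m × Fin n) :=
  fun l r => if r then decP m n t l else none

def aBits (t : ℕ) (payload : AliceMux m n f → Fin m × Fin n → List Bool)
    (x : AliceMux m n f) (o : Fin m × Fin n) : ℕ → Bool :=
  fun i => (bitsOf (idxP n o) t ++ payload x o).getD i false

def muxFinA (t s : ℕ) (payload : AliceMux m n f → Fin m × Fin n → List Bool)
    (o₀ : Fin m × Fin n)
    (st : AliceMux m n f → Prot (BMat m n) (BMat m n) (Fin m × Fin n)) :
    HDTree (AliceMux m n f) (Option (Fin m × Fin n)) :=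
  verifyA (t+s) (fun x => aBits t payload x (labelP o₀ (st x))) (outMap m n t)

def muxCheck (t : ℕ) (bcheck : BobMux m n f → Fin m × Fin n → List Bool → Bool) :
    BobMux m n f → List Bool → Bool :=
  fun y l => (decP m n t l).elim false fun o => bcheck y o (l.drop t)

def muxFinB (t s : ℕ) (bcheck : BobMux m n f → Fin m × Fin n → List Bool → Bool) :
    HDTree (BobMux m n f) (Option (Fin m × Fin n)) :=
  verifyB (t+s) (muxCheck t bcheck) (outMap m n t)

lemma listOf_aBits (t s : ℕ) (payload : AliceMux m n f → Fin m × Fin n → List Bool)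
    (hplen : ∀ x o, (payload x o).length = s) (x : AliceMux m n f) (o : Fin m × Fin n) :
    listOf (t+s) (aBits t payload x o) = bitsOf (idxP n o) t ++ payload x o := by
  have hlen : (bitsOf (idxP n o) t ++ payload x o).length = t + s := by
    simp [length_bitsOf, hplen]
  conv_lhs => rw [← hlen]
  exact listOf_getD _

lemma hdRun_muxVerify (t s : ℕ) (hpow : m * n ≤ 2 ^ t)
    (payload : AliceMux m n f → Fin m × Fin n → List Bool)
    (hplen : ∀ x o, (payload x o).length = s)
    (bcheck : BobMux m n f → Fin m × Fin n → List Bool → Bool)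
    (o₀ : Fin m × Fin n)
    (st : AliceMux m n f → Prot (BMat m n) (BMat m n) (Fin m × Fin n))
    (adv : ℕ → Bool × Bool) (x : AliceMux m n f) (y : BobMux m n f) :
    hdRun (1+(t+s)) adv (muxFinA t s payload o₀ st) (muxFinB t s bcheck) x y
      = (.leaf (if bcheck y (labelP o₀ (st x)) (payload x (labelP o₀ (st x))) = true
            then some (labelP o₀ (st x)) else none),
         .leaf (if bcheck y (labelP o₀ (st x)) (payload x (labelP o₀ (st x))) = true
            then some (labelP o₀ (st x)) else none)) := by
  rw [muxFinA, muxFinB, hdRun_verify]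
  set o := labelP o₀ (st x) with ho
  rw [listOf_aBits t s payload hplen x o]
  have hdec := decP_encode o (payload x o) hpow
  have hdrop : (bitsOf (idxP n o) t ++ payload x o).drop t = payload x o :=
    List.drop_left' (length_bitsOf _ _)
  rw [muxCheck]
  simp only [hdec, hdrop, Option.elim, outMap]

lemma allClassical_muxVerify (t s : ℕ)
    (payload : AliceMux m n f → Fin m × Fin n → List Bool)
    (bcheck : BobMux m n f → Fin m × Fin n → List Bool → Bool)
    (o₀ : Fin m × Fin n)
    (st : AliceMux m n f → Prot (BMat m n) (BMat m n) (Fin m × Fin n))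
    (adv : ℕ → Bool × Bool) (x : AliceMux m n f) (y : BobMux m n f) :
    AllClassical (1+(t+s)) adv (muxFinA t s payload o₀ st) (muxFinB t s bcheck) x y := by
  rw [muxFinA, muxFinB]
  exact allClassical_verify _ _ _ _ _ x y

end Master

end KWAux


namespace KWAux

section MasterBound

variable {m n : ℕ} {f : BFunc m}

lemma cphd_le_master (hm : 0 < m) (hn : 0 < n)
    (R : AliceMux m n f → BobMux m n f → Option (Fin m × Fin n) → Prop)
    (s : ℕ)
    (payload : AliceMux m n f → Fin m × Fin n → List Bool)
    (hplen : ∀ x o, (payload x o).length = s)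
    (bcheck : BobMux m n f → Fin m × Fin n → List Bool → Bool)
    (hnone : ∀ x y, x.1.1 ≠ y.1.1 → R x y none)
    (hsome : ∀ x y o, bcheck y o (payload x o) = true → R x y (some o))
    (Q : BFunc n → Prot (BMat m n) (BMat m n) (Fin m × Fin n)) (Dmax : ℕ)
    (hQd : ∀ g, (Q g).depth ≤ Dmax)
    (hQgood : ∀ (x : AliceMux m n f) (y : BobMux m n f), x.1.1 = y.1.1 →
      bcheck y ((Q x.1.1).run x.1.2 y.1.2) (payload x ((Q x.1.1).run x.1.2 y.1.2)) = true) :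
    Cphd R muxGA muxGB ≤ (1 + (Nat.clog 2 (m * n) + s)) + Dmax := by
  classical
  set t := Nat.clog 2 (m * n) with ht
  have hpow : m * n ≤ 2 ^ t := Nat.le_pow_clog (by norm_num) _
  set o₀ : Fin m × Fin n := (⟨0, hm⟩, ⟨0, hn⟩) with ho₀
  set uA : AliceMux m n f → BMat m n := fun x => x.1.2 with huA
  set vB : BobMux m n f → BMat m n := fun y => y.1.2 with hvB
  set finA := muxFinA (f := f) t s payload o₀ with hfinA
  set finB := muxFinB (f := f) t s bcheck with hfinB
  set stA0 : AliceMux m n f → Prot (BMat m n) (BMat m n) (Fin m × Fin n) :=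
    fun x => Q x.1.1 with hstA0
  set stB0 : BobMux m n f → Prot (BMat m n) (BMat m n) (Fin m × Fin n) :=
    fun y => Q y.1.1 with hstB0
  apply Nat.sInf_le
  refine ⟨⟨simA uA finA Dmax stA0, simB vB finB Dmax stB0, ?_, ?_⟩, ?_, ?_⟩
  · rw [Nat.add_comm]
    exact isFull_simA _ _ (1+(t+s))
      (fun st => by rw [hfinA, muxFinA]; exact isFull_verifyA _ _ _) Dmax _
  · rw [Nat.add_comm]
    exact isFull_simB _ _ (1+(t+s))
      (by rw [hfinB, muxFinB]; exact isFull_verifyB _ _ _) Dmax _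
  · -- Solves
    intro x y adv
    dsimp only
    rw [hdRun_add (1+(t+s)) Dmax adv]
    by_cases hg : x.1.1 = y.1.1
    · obtain ⟨stA', stB', heq, hA, hB, hac⟩ := simRun_sync uA finA finB vB Dmax adv stA0 stB0
        x y (show Q x.1.1 = Q y.1.1 by rw [hg]) (hQd _)
      rw [heq]
      have hA0 : simA uA finA 0 stA' = finA stA' := by simp [simA]
      have hB0 : simB vB finB 0 stB' = finB := by simp [simB]
      dsimp only
      rw [hA0, hB0, hfinA, hfinB, hdRun_muxVerify t s hpow payload hplen bcheck o₀ stA' _ x y]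
      have hoo : labelP o₀ (stA' x) = (Q x.1.1).run x.1.2 y.1.2 := by
        rw [hA]; rfl
      have hbc := hQgood x y hg
      refine ⟨_, rfl, rfl, ?_⟩
      rw [hoo, if_pos hbc]
      exact hsome x y _ hbc
    · obtain ⟨stA', stB', heq⟩ := simRun_any uA finA finB vB Dmax adv stA0 stB0 x y
      rw [heq]
      have hA0 : simA uA finA 0 stA' = finA stA' := by simp [simA]
      have hB0 : simB vB finB 0 stB' = finB := by simp [simB]
      dsimp only
      rw [hA0, hB0, hfinA, hfinB, hdRun_muxVerify t s hpow payload hplen bcheck o₀ stA' _ x y]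
      by_cases hb : bcheck y (labelP o₀ (stA' x)) (payload x (labelP o₀ (stA' x))) = true
      · exact ⟨_, rfl, rfl, by rw [if_pos hb]; exact hsome x y _ hb⟩
      · exact ⟨_, rfl, rfl, by rw [if_neg hb]; exact hnone x y hg⟩
  · -- Partially half-duplex
    intro x y adv hg
    have hg' : x.1.1 = y.1.1 := hg
    obtain ⟨stA', stB', heq, hA, hB, hac⟩ := simRun_sync uA finA finB vB Dmax adv stA0 stB0
      x y (show Q x.1.1 = Q y.1.1 by rw [hg']) (hQd _)
    dsimp only
    refine allClassical_add (1+(t+s)) Dmax adv _ _ x y hac ?_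
    rw [heq]
    have hA0 : simA uA finA 0 stA' = finA stA' := by simp [simA]
    have hB0 : simB vB finB 0 stB' = finB := by simp [simB]
    dsimp only
    rw [hA0, hB0, hfinA, hfinB]
    exact allClassical_muxVerify t s payload bcheck o₀ stA' _ x y

end MasterBound

end KWAux


namespace KWAux

lemma nonconst_pos {m : ℕ} {f : BFunc m} (hf : NonConst f) : 0 < m := by
  by_contra h
  push_neg at h
  interval_cases m
  obtain ⟨⟨a, ha⟩, ⟨b, hb⟩⟩ := hf
  have hab : a = b := funext fun i => i.elim0
  rw [hab, hb] at ha
  exact Bool.noConfusion ha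

lemma clog_le_logb (k : ℕ) (hk : 1 ≤ k) :
    (Nat.clog 2 k : ℝ) ≤ Real.logb 2 k + 1 := by
  rcases Nat.eq_zero_or_pos (Nat.clog 2 k) with h0 | hpos
  · rw [h0]
    have h1 : (0:ℝ) ≤ Real.logb 2 k :=
      Real.logb_nonneg (by norm_num) (by exact_mod_cast hk)
    push_cast
    linarith
  · have hk2 : 1 < k := by
      by_contra h
      push_neg at h
      interval_cases k
      simp [Nat.clog_one_right] at hpos
    have hlt : 2 ^ (Nat.clog 2 k - 1) < k := by
      have := Nat.pow_pred_clog_lt_self (by norm_num : (1:ℕ) < 2) hk2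
      simpa [Nat.pred_eq_sub_one] using this
    have h1 : ((Nat.clog 2 k - 1 : ℕ) : ℝ) ≤ Real.logb 2 k := by
      have h2 : ((2:ℝ) ^ (Nat.clog 2 k - 1 : ℕ)) ≤ (k : ℝ) := by
        exact_mod_cast hlt.le
      calc ((Nat.clog 2 k - 1 : ℕ) : ℝ)
          = Real.logb 2 ((2:ℝ) ^ (Nat.clog 2 k - 1 : ℕ)) := by
            rw [Real.logb_pow, Real.logb_self_eq_one (by norm_num)]
            ring
      _ ≤ Real.logb 2 k :=
          Real.logb_le_logb_of_le (by norm_num) (by positivity) h2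
    have h3 : ((Nat.clog 2 k - 1 : ℕ) : ℝ) = (Nat.clog 2 k : ℝ) - 1 := by
      rw [Nat.cast_sub hpos]
      norm_num
    linarith [h1, h3.symm.le]

lemma exists_prot_diam {m n : ℕ} (f : BFunc m) (hm : 0 < m) (hn : 0 < n) (g : BFunc n) :
    ∃ p : Prot {X : BMat m n // compFG f g X = true}
        {Y : BMat m n // compFG f g Y = false} (Fin m × Fin n),
      p.Solves (KWdiam f g) := by
  refine exists_solving_prot (fun U V o => U o.1 o.2 ≠ V o.1 o.2) (⟨0, hm⟩, ⟨0, hn⟩) ?_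
  intro U V hU hV
  have hne : gRows g U ≠ gRows g V := by
    intro h
    have heq : compFG f g U = compFG f g V := by rw [compFG, compFG, h]
    rw [hU, hV] at heq
    exact Bool.noConfusion heq
  obtain ⟨i, hi⟩ := Function.ne_iff.mp hne
  have hrow : U i ≠ V i := fun h => hi (congrArg g h)
  obtain ⟨j, hj⟩ := Function.ne_iff.mp hrow
  exact ⟨(i, j), hj⟩

lemma exists_prot_strong {m n : ℕ} (f : BFunc m) (hm : 0 < m) (hn : 0 < n) (g : BFunc n) :
    ∃ p : Prot {X : BMat m n // compFG f g X = true}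
        {Y : BMat m n // compFG f g Y = false} (Fin m × Fin n),
      p.Solves (KWstrong f g) := by
  refine exists_solving_prot
    (fun U V o => U o.1 o.2 ≠ V o.1 o.2 ∧ g (U o.1) ≠ g (V o.1)) (⟨0, hm⟩, ⟨0, hn⟩) ?_
  intro U V hU hV
  have hne : gRows g U ≠ gRows g V := by
    intro h
    have heq : compFG f g U = compFG f g V := by rw [compFG, compFG, h]
    rw [hU, hV] at heq
    exact Bool.noConfusion heq
  obtain ⟨i, hi⟩ := Function.ne_iff.mp hne
  have hrow : U i ≠ V i := fun h => hi (congrArg g h)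
  obtain ⟨j, hj⟩ := Function.ne_iff.mp hrow
  exact ⟨(i, j), hj, hi⟩

end KWAux


namespace KWAux

lemma cphd_zero_n {m : ℕ} (f : BFunc m)
    (R : AliceMux m 0 f → BobMux m 0 f → Option (Fin m × Fin 0) → Prop)
    (hR : ∀ x y, x.1.1 ≠ y.1.1 → R x y none) :
    Cphd R muxGA muxGB = 0 := by
  have h : Cphd R muxGA muxGB ≤ 0 := by
    apply Nat.sInf_le
    refine ⟨⟨.leaf none, .leaf none, .leaf _, .leaf _⟩, ?_, ?_⟩
    · intro x y adv
      refine ⟨none, rfl, rfl, hR x y ?_⟩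
      intro hg
      have hXY : x.1.2 = y.1.2 := funext fun i => funext fun j => j.elim0
      have hx := x.2
      rw [hg, hXY] at hx
      rw [y.2] at hx
      exact Bool.noConfusion hx
    · intro x y adv hg
      trivial
  omega

lemma diam_bound {m n : ℕ} (f : BFunc m) (hm : 0 < m) (hn : 0 < n) :
    ∃ g : BFunc n,
      (Cphd (MuxDiam (m := m) (n := n) f) muxGA muxGB : ℝ) -
          Real.logb 2 ((m : ℝ) * n) - 3 ≤ (CC (KWdiam f g) : ℝ) := by
  classical
  obtain ⟨g, hgmax⟩ := Finite.exists_max (fun g : BFunc n => CC (KWdiam f g))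
  refine ⟨g, ?_⟩
  have hQ : ∀ g' : BFunc n, ∃ p : Prot {X : BMat m n // compFG f g' X = true}
      {Y : BMat m n // compFG f g' Y = false} (Fin m × Fin n),
      p.Solves (KWdiam f g') ∧ p.depth = CC (KWdiam f g') :=
    fun g' => exists_CC_prot _ (exists_prot_diam f hm hn g')
  choose pgs hsol hdep using hQ
  have hmaster : Cphd (MuxDiam (m := m) (n := n) f) muxGA muxGB
      ≤ (1 + (Nat.clog 2 (m * n) + 1)) + CC (KWdiam f g) := by
    refine cphd_le_master hm hn (MuxDiam f) 1
      (fun x o => [x.1.2 o.1 o.2]) (fun x o => rfl)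
      (fun y o l => y.1.2 o.1 o.2 != l.getD 0 false)
      (fun x y h => h) ?_ (fun g' => extendP (pgs g')) (CC (KWdiam f g)) ?_ ?_
    · intro x y o hb
      obtain ⟨i, j⟩ := o
      simp only [List.getD_cons_zero, bne_iff_ne, ne_eq] at hb
      show x.1.2 i j ≠ y.1.2 i j
      exact fun h => hb h.symm
    · intro g'
      rw [depth_extendP, hdep]
      exact hgmax g'
    · intro x y hg
      have hx : compFG f x.1.1 x.1.2 = true := x.2
      have hy : compFG f x.1.1 y.1.2 = false := by rw [hg]; exact y.2
      have hval := hsol x.1.1 ⟨x.1.2, hx⟩ ⟨y.1.2, hy⟩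
      simp only [List.getD_cons_zero, bne_iff_ne, ne_eq]
      rw [run_extendP (pgs x.1.1) hx hy]
      exact fun h => hval h.symm
  have h1 : (Cphd (MuxDiam (m := m) (n := n) f) muxGA muxGB : ℝ)
      ≤ (((1 + (Nat.clog 2 (m * n) + 1)) + CC (KWdiam f g) : ℕ) : ℝ) :=
    Nat.cast_le.mpr hmaster
  have h2 := clog_le_logb (m * n) (Nat.one_le_iff_ne_zero.mpr (Nat.mul_pos hm hn).ne')
  push_cast at h1 h2
  linarith

lemma strong_bound {m n : ℕ} (f : BFunc m) (hm : 0 < m) (hn : 0 < n) :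
    ∃ g : BFunc n,
      (Cphd (MuxStrong (m := m) (n := n) f) muxGA muxGB : ℝ) -
          Real.logb 2 ((m : ℝ) * n) - 4 ≤ (CC (KWstrong f g) : ℝ) := by
  classical
  obtain ⟨g, hgmax⟩ := Finite.exists_max (fun g : BFunc n => CC (KWstrong f g))
  refine ⟨g, ?_⟩
  have hQ : ∀ g' : BFunc n, ∃ p : Prot {X : BMat m n // compFG f g' X = true}
      {Y : BMat m n // compFG f g' Y = false} (Fin m × Fin n),
      p.Solves (KWstrong f g') ∧ p.depth = CC (KWstrong f g') :=
    fun g' => exists_CC_prot _ (exists_prot_strong f hm hn g')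
  choose pgs hsol hdep using hQ
  have hmaster : Cphd (MuxStrong (m := m) (n := n) f) muxGA muxGB
      ≤ (1 + (Nat.clog 2 (m * n) + 2)) + CC (KWstrong f g) := by
    refine cphd_le_master hm hn (MuxStrong f) 2
      (fun x o => [x.1.2 o.1 o.2, x.1.1 (x.1.2 o.1)]) (fun x o => rfl)
      (fun y o l => (y.1.2 o.1 o.2 != l.getD 0 false)
        && (y.1.1 (y.1.2 o.1) != l.getD 1 false))
      (fun x y h => h) ?_ (fun g' => extendP (pgs g')) (CC (KWstrong f g)) ?_ ?_
    · intro x y o hb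
      obtain ⟨i, j⟩ := o
      simp only [List.getD_cons_zero, List.getD_cons_succ, Bool.and_eq_true,
        bne_iff_ne, ne_eq] at hb
      show x.1.2 i j ≠ y.1.2 i j ∧ x.1.1 (x.1.2 i) ≠ y.1.1 (y.1.2 i)
      exact ⟨fun h => hb.1 h.symm, fun h => hb.2 h.symm⟩
    · intro g'
      rw [depth_extendP, hdep]
      exact hgmax g'
    · intro x y hg
      have hx : compFG f x.1.1 x.1.2 = true := x.2
      have hy : compFG f x.1.1 y.1.2 = false := by rw [hg]; exact y.2
      have hval := hsol x.1.1 ⟨x.1.2, hx⟩ ⟨y.1.2, hy⟩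
      simp only [List.getD_cons_zero, List.getD_cons_succ, Bool.and_eq_true,
        bne_iff_ne, ne_eq]
      rw [run_extendP (pgs x.1.1) hx hy, ← hg]
      exact ⟨fun h => hval.1 h.symm, fun h => hval.2 h.symm⟩
  have h1 : (Cphd (MuxStrong (m := m) (n := n) f) muxGA muxGB : ℝ)
      ≤ (((1 + (Nat.clog 2 (m * n) + 2)) + CC (KWstrong f g) : ℕ) : ℝ) :=
    Nat.cast_le.mpr hmaster
  have h2 := clog_le_logb (m * n) (Nat.one_le_iff_ne_zero.mpr (Nat.mul_pos hm hn).ne')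
  push_cast at h1 h2
  linarith

end KWAux


theorem statement1 (m n : ℕ) (f : BFunc m) (hf : NonConst f) :
    (∃ g : BFunc n,
        (Cphd (MuxDiam (m := m) (n := n) f) muxGA muxGB : ℝ) -
            Real.logb 2 ((m : ℝ) * n) - 3 ≤ (CC (KWdiam f g) : ℝ)) ∧
    (∃ g : BFunc n,
        (Cphd (MuxStrong (m := m) (n := n) f) muxGA muxGB : ℝ) -
            Real.logb 2 ((m : ℝ) * n) - 4 ≤ (CC (KWstrong f g) : ℝ)) := by
  classical
  have hm : 0 < m := KWAux.nonconst_pos hf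
  rcases Nat.eq_zero_or_pos n with hn | hn
  · subst hn
    constructor
    · refine ⟨fun _ => true, ?_⟩
      rw [KWAux.cphd_zero_n f (MuxDiam f) (fun x y h => h)]
      have hcc : (0:ℝ) ≤ (CC (KWdiam f (fun _ => true : BFunc 0)) : ℝ) := Nat.cast_nonneg _
      norm_num [Real.logb_zero]
      linarith
    · refine ⟨fun _ => true, ?_⟩
      rw [KWAux.cphd_zero_n f (MuxStrong f) (fun x y h => h)]
      have hcc : (0:ℝ) ≤ (CC (KWstrong f (fun _ => true : BFunc 0)) : ℝ) := Nat.cast_nonneg _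
      norm_num [Real.logb_zero]
      linarith
  · exact ⟨KWAux.diam_bound f hm hn, KWAux.strong_bound f hm hn⟩
end

section
/- Let Π be a partially half-duplex protocol solving KW_f ⋄ MUX_n for some non-constant f:{0,1}^m→{0,1} and n∈ℕ, and let π₁ be a transcript of Π such that V_{π₁}≠∅ and χ(G_{π₁}) ≥ 4. Then the depth of Π is at least |π₁| + log₂ log₂ χ(G_{π₁}) − log₂ log₂ log₂ χ(G_{π₁}) − 4. -/
section Stmt4Aux

variable {I J O' : Type}

def advS (s : List Bool) : ℕ → Bool × Bool := fun i => (s.getD i false, s.getD i false)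

def descend : HDTree I O' → List Bool → I → HDTree I O'
  | t, [], _ => t
  | HDTree.leaf o, _ :: _, _ => HDTree.leaf o
  | HDTree.node act ch, b :: rest, x => descend (ch (act x).isSome b) rest x

inductive Kind : Type where
  | cls : Kind
  | sil : Kind
  | was : Kind
  deriving DecidableEq

instance : Fintype Kind :=
  ⟨⟨↑[Kind.cls, Kind.sil, Kind.was], Multiset.coe_nodup.2 (by decide)⟩,
    fun k => by cases k <;> simp⟩

example : Fintype.card Kind = 3 := rfl

def acc (o₀ : O') : HDTree I O' → List Bool → Kind → I → Prop
  | HDTree.leaf o, [], k, _ => k = Kind.cls ∧ o = o₀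
  | HDTree.node act _, [], k, x =>
      (k = Kind.sil ∧ act x = none) ∨ (k = Kind.was ∧ (act x).isSome = true)
  | HDTree.leaf _, _ :: _, _, _ => False
  | HDTree.node act ch, b :: s, k, x =>
      match act x with
      | some c => c = b ∧ acc o₀ (ch true b) s k x
      | none => acc o₀ (ch false b) s k x

theorem cons_length_le : ∀ (tr : List Bool) (t : HDTree I O') (dd : ℕ),
    t.IsFull dd → ∀ x : I, t.Cons tr x → tr.length ≤ dd := by
  intro tr
  induction tr with
  | nil => intro t dd _ x _; exact Nat.zero_le _
  | cons b tr ih =>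
    intro t dd hf x hc
    cases t with
    | leaf o => exact absurd hc (by simp [HDTree.Cons])
    | node act ch =>
      cases hf with
      | node h =>
        simp only [HDTree.Cons] at hc
        simp only [List.length_cons]
        cases hact : act x with
        | some c =>
          rw [hact] at hc
          exact Nat.succ_le_succ (ih _ _ (h true b) x hc.2)
        | none =>
          rw [hact] at hc
          exact Nat.succ_le_succ (ih _ _ (h false b) x hc)

theorem isFull_descend : ∀ (tr : List Bool) (t : HDTree I O') (dd : ℕ),
    t.IsFull dd → ∀ x : I, (descend t tr x).IsFull (dd - tr.length) := by
  intro tr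
  induction tr with
  | nil => intro t dd hf x; simpa [descend] using hf
  | cons b tr ih =>
    intro t dd hf x
    cases t with
    | leaf o =>
      cases hf
      simpa [descend] using HDTree.IsFull.leaf o
    | node act ch =>
      cases hf with
      | node h =>
        rename_i d'
        have := ih (ch (act x).isSome b) d' (h _ b) x
        simpa [descend, Nat.succ_sub_succ] using this

end Stmt4Aux

section Stmt4Aux2

variable {I J O' : Type}

theorem hdRun_add : ∀ (a : ℕ) {b N : ℕ}, a + b = N → ∀ (adv : ℕ → Bool × Bool)
    (t1 : HDTree I O') (t2 : HDTree J O') (x : I) (y : J),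
    hdRun N adv t1 t2 x y =
      hdRun b (fun i => adv (i + a)) (hdRun a adv t1 t2 x y).1 (hdRun a adv t1 t2 x y).2 x y := by
  intro a
  induction a with
  | zero => intro b N hN adv t1 t2 x y; subst hN; rw [Nat.zero_add]; simp [hdRun]
  | succ a ih =>
    intro b N hN adv t1 t2 x y
    subst hN
    rw [Nat.succ_add]
    exact ih rfl (fun i => adv (i + 1)) _ _ x y

theorem allClassical_add : ∀ (a : ℕ) {b N : ℕ}, a + b = N → ∀ (adv : ℕ → Bool × Bool)
    (t1 : HDTree I O') (t2 : HDTree J O') (x : I) (y : J),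
    AllClassical N adv t1 t2 x y →
    AllClassical b (fun i => adv (i + a)) (hdRun a adv t1 t2 x y).1 (hdRun a adv t1 t2 x y).2 x y := by
  intro a
  induction a with
  | zero => intro b N hN adv t1 t2 x y h; subst hN; rw [Nat.zero_add] at h; exact h
  | succ a ih =>
    intro b N hN adv t1 t2 x y h
    subst hN
    rw [Nat.succ_add] at h
    exact ih rfl (fun i => adv (i + 1)) _ _ x y h.2

theorem phase1 : ∀ (tr : List Bool) (adv : ℕ → Bool × Bool),
    (∀ (i : ℕ) (h : i < tr.length), adv i = (tr[i], tr[i])) →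
    ∀ (t1 : HDTree I O') (t2 : HDTree J O') (x : I) (y : J),
    t1.Cons tr x → t2.Cons tr y →
    hdRun tr.length adv t1 t2 x y = (descend t1 tr x, descend t2 tr y) := by
  intro tr
  induction tr with
  | nil => intro adv _ t1 t2 x y _ _; simp [hdRun, descend]
  | cons b tr ih =>
    intro adv hadv t1 t2 x y h1 h2
    cases t1 with
    | leaf o => exact absurd h1 (by simp [HDTree.Cons])
    | node a1 c1 =>
      cases t2 with
      | leaf o => exact absurd h2 (by simp [HDTree.Cons])
      | node a2 c2 =>
        have hadv0 : adv 0 = (b, b) := hadv 0 (by simp)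
        have hadv' : ∀ (i : ℕ) (h : i < tr.length), (fun i => adv (i + 1)) i = (tr[i], tr[i]) := by
          intro i h
          exact hadv (i + 1) (by simpa using Nat.succ_lt_succ h)
        simp only [HDTree.Cons] at h1 h2
        simp only [List.length_cons, descend]
        cases hA : a1 x with
        | some ca =>
          rw [hA] at h1
          obtain ⟨rfl, h1'⟩ := h1
          cases hB : a2 y with
          | some cb =>
            rw [hB] at h2
            obtain ⟨rfl, h2'⟩ := h2
            simp only [hdRun, hdStep, hA, hB, hadv0, Option.isSome_some]
            exact ih _ hadv' _ _ x y h1' h2'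
          | none =>
            rw [hB] at h2
            simp only [hdRun, hdStep, hA, hB, hadv0, Option.isSome_some, Option.isSome_none,
              Option.getD_some]
            exact ih _ hadv' _ _ x y h1' h2
        | none =>
          rw [hA] at h1
          cases hB : a2 y with
          | some cb =>
            rw [hB] at h2
            obtain ⟨rfl, h2'⟩ := h2
            simp only [hdRun, hdStep, hA, hB, hadv0, Option.isSome_some, Option.isSome_none,
              Option.getD_some]
            exact ih _ hadv' _ _ x y h1 h2'
          | none =>
            rw [hB] at h2
            simp only [hdRun, hdStep, hA, hB, hadv0, Option.isSome_none, Option.getD_none]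
            exact ih _ hadv' _ _ x y h1 h2

end Stmt4Aux2

section Stmt4Aux3

variable {I J O' : Type}

theorem track : ∀ (s : List Bool) (k : Kind) (o₀ : O') (adv : ℕ → Bool × Bool),
    (∀ (i : ℕ) (h : i < s.length), adv i = (s[i], s[i])) →
    ∀ (t1 : HDTree I O') (t2 : HDTree J O') (x : I) (y : J),
    acc o₀ t1 s k x → acc o₀ t2 s k y →
    acc o₀ (hdRun s.length adv t1 t2 x y).1 [] k x ∧
      acc o₀ (hdRun s.length adv t1 t2 x y).2 [] k y := by
  intro s
  induction s with
  | nil => intro k o₀ adv _ t1 t2 x y h1 h2; exact ⟨h1, h2⟩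
  | cons b s ih =>
    intro k o₀ adv hadv t1 t2 x y h1 h2
    cases t1 with
    | leaf o => exact absurd h1 (by simp [acc])
    | node a1 c1 =>
      cases t2 with
      | leaf o => exact absurd h2 (by simp [acc])
      | node a2 c2 =>
        have hadv0 : adv 0 = (b, b) := hadv 0 (by simp)
        have hadv' : ∀ (i : ℕ) (h : i < s.length), (fun i => adv (i + 1)) i = (s[i], s[i]) := by
          intro i h
          exact hadv (i + 1) (by simpa using Nat.succ_lt_succ h)
        simp only [acc] at h1 h2
        simp only [List.length_cons]
        cases hA : a1 x with
        | some ca =>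
          rw [hA] at h1
          obtain ⟨rfl, h1'⟩ := h1
          cases hB : a2 y with
          | some cb =>
            rw [hB] at h2
            obtain ⟨rfl, h2'⟩ := h2
            simp only [hdRun, hdStep, hA, hB, hadv0, Option.isSome_some]
            exact ih _ _ _ hadv' _ _ x y h1' h2'
          | none =>
            rw [hB] at h2
            simp only [hdRun, hdStep, hA, hB, hadv0, Option.isSome_some, Option.isSome_none,
              Option.getD_some]
            exact ih _ _ _ hadv' _ _ x y h1' h2
        | none =>
          rw [hA] at h1
          cases hB : a2 y with
          | some cb =>
            rw [hB] at h2
            obtain ⟨rfl, h2'⟩ := h2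
            simp only [hdRun, hdStep, hA, hB, hadv0, Option.isSome_some, Option.isSome_none,
              Option.getD_some]
            exact ih _ _ _ hadv' _ _ x y h1 h2'
          | none =>
            rw [hB] at h2
            simp only [hdRun, hdStep, hA, hB, hadv0, Option.isSome_none, Option.getD_none]
            exact ih _ _ _ hadv' _ _ x y h1 h2

theorem extract : ∀ (Dp : ℕ) (t1 : HDTree I O') (t2 : HDTree J O'),
    t1.IsFull Dp → t2.IsFull Dp → ∀ (adv : ℕ → Bool × Bool) (x : I) (y : J) (o₀ : O'),
    hdRun Dp adv t1 t2 x y = (HDTree.leaf o₀, HDTree.leaf o₀) →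
    ∃ (s : List Bool) (k : Kind), acc o₀ t1 s k x ∧ acc o₀ t2 s k y ∧
      s.length ≤ Dp ∧ (k = Kind.cls → s.length = Dp) ∧ (k ≠ Kind.cls → s.length < Dp) := by
  intro Dp
  induction Dp with
  | zero =>
    intro t1 t2 hf1 hf2 adv x y o₀ hrun
    simp only [hdRun, Prod.mk.injEq] at hrun
    refine ⟨[], Kind.cls, ?_, ?_, le_rfl, fun _ => rfl, fun h => absurd rfl h⟩
    · rw [hrun.1]; exact ⟨rfl, rfl⟩
    · rw [hrun.2]; exact ⟨rfl, rfl⟩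
  | succ Dp ih =>
    intro t1 t2 hf1 hf2 adv x y o₀ hrun
    cases t1 with
    | leaf o => cases hf1
    | node a1 c1 =>
      cases t2 with
      | leaf o => cases hf2
      | node a2 c2 =>
        cases hf1 with
        | node h1 =>
          cases hf2 with
          | node h2 =>
            cases hA : a1 x with
            | some ca =>
              cases hB : a2 y with
              | some cb =>
                refine ⟨[], Kind.was, ?_, ?_, ?_, ?_, ?_⟩
                · exact Or.inr ⟨rfl, by rw [hA]; rfl⟩
                · exact Or.inr ⟨rfl, by rw [hB]; rfl⟩
                · exact Nat.zero_le _
                · exact fun h => absurd h (by decide)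
                · exact fun _ => Nat.succ_pos _
              | none =>
                simp only [hdRun, hdStep, hA, hB, Option.getD_some] at hrun
                obtain ⟨s, k, hacc1, hacc2, hle, hcls, hncls⟩ :=
                  ih _ _ (h1 true ca) (h2 false ca) _ x y o₀ hrun
                refine ⟨ca :: s, k, ?_, ?_, Nat.succ_le_succ hle,
                  fun h => by simpa using hcls h, fun h => by simpa using Nat.succ_lt_succ (hncls h)⟩
                · simp only [acc, hA, eq_self_iff_true, true_and]; exact hacc1
                · simp only [acc, hB]; exact hacc2
            | none =>
              cases hB : a2 y with
              | some cb =>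
                simp only [hdRun, hdStep, hA, hB, Option.getD_some] at hrun
                obtain ⟨s, k, hacc1, hacc2, hle, hcls, hncls⟩ :=
                  ih _ _ (h1 false cb) (h2 true cb) _ x y o₀ hrun
                refine ⟨cb :: s, k, ?_, ?_, Nat.succ_le_succ hle,
                  fun h => by simpa using hcls h, fun h => by simpa using Nat.succ_lt_succ (hncls h)⟩
                · simp only [acc, hA]; exact hacc1
                · simp only [acc, hB, eq_self_iff_true, true_and]; exact hacc2
              | none =>
                refine ⟨[], Kind.sil, ?_, ?_, ?_, ?_, ?_⟩
                · exact Or.inl ⟨rfl, hA⟩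
                · exact Or.inl ⟨rfl, hB⟩
                · exact Nat.zero_le _
                · exact fun h => absurd h (by decide)
                · exact fun _ => Nat.succ_pos _

theorem acc_nil_cls {t : HDTree I O'} {o₀ : O'} {x : I}
    (h : acc o₀ t [] Kind.cls x) : t = HDTree.leaf o₀ := by
  cases t with
  | leaf o => simp only [acc] at h; rw [h.2]
  | node a c =>
    simp only [acc] at h
    rcases h with ⟨h, -⟩ | ⟨h, -⟩ <;> cases h

theorem acc_nil_notcls {t1 : HDTree I O'} {t2 : HDTree J O'} {o₀ : O'} {k : Kind} {x : I} {y : J}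
    (hk : k ≠ Kind.cls) (h1 : acc o₀ t1 [] k x) (h2 : acc o₀ t2 [] k y) :
    ¬ ClassicalRound t1 t2 x y := by
  cases t1 with
  | leaf o => simp only [acc] at h1; exact absurd h1.1 hk
  | node a1 c1 =>
    cases t2 with
    | leaf o => simp only [acc] at h2; exact absurd h2.1 hk
    | node a2 c2 =>
      simp only [acc] at h1 h2
      rcases h1 with ⟨rfl, hA⟩ | ⟨rfl, hA⟩
      · rcases h2 with ⟨-, hB⟩ | ⟨h, -⟩
        · simp [ClassicalRound, hA, hB]
        · cases h
      · rcases h2 with ⟨h, -⟩ | ⟨-, hB⟩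
        · cases h
        · simp [ClassicalRound, hA, hB]

end Stmt4Aux3

section Stmt4Main

variable {m n : ℕ} {f : BFunc m} {d : ℕ}

/-- Alice-side accepted witnesses after transcript `tr`, for function `g`. -/
def Wset (P : HDProt (AliceMux m n f) (BobMux m n f) (Option (Fin m × Fin n)) d)
    (tr : List Bool) (Dp : ℕ) (g : BFunc n) : Set (List Bool × Kind) :=
  {w | ∃ (X : BMat m n) (hX : compFG f g X = true),
      P.alice.Cons tr ⟨(g, X), hX⟩ ∧
      acc none (descend P.alice tr ⟨(g, X), hX⟩) w.1 w.2 ⟨(g, X), hX⟩ ∧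
      w.1.length ≤ Dp ∧ (w.2 = Kind.cls → w.1.length = Dp) ∧
      (w.2 ≠ Kind.cls → w.1.length < Dp)}

/-- Bob-side accepted witnesses after transcript `tr`, for function `g`. -/
def Mset (P : HDProt (AliceMux m n f) (BobMux m n f) (Option (Fin m × Fin n)) d)
    (tr : List Bool) (Dp : ℕ) (g : BFunc n) : Set (List Bool × Kind) :=
  {w | ∃ (Y : BMat m n) (hY : compFG f g Y = false),
      P.bob.Cons tr ⟨(g, Y), hY⟩ ∧
      acc none (descend P.bob tr ⟨(g, Y), hY⟩) w.1 w.2 ⟨(g, Y), hY⟩ ∧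
      w.1.length ≤ Dp ∧ (w.2 = Kind.cls → w.1.length = Dp) ∧
      (w.2 ≠ Kind.cls → w.1.length < Dp)}

theorem claim1 (P : HDProt (AliceMux m n f) (BobMux m n f) (Option (Fin m × Fin n)) d)
    (hsol : P.Solves (MuxDiam f)) (tr : List Bool) (Dp : ℕ)
    (hd : tr.length + Dp = d) {g g' : BFunc n} {Z : BMat m n}
    (hZX : Z ∈ XpiHD P tr g) (hZY : Z ∈ YpiHD P tr g') :
    ∃ w, w ∈ Wset P tr Dp g ∧ w ∈ Mset P tr Dp g' := by
  obtain ⟨hX, consA⟩ := hZX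
  obtain ⟨hY, consB⟩ := hZY
  obtain ⟨o, e1, e2, hR⟩ := hsol ⟨(g, Z), hX⟩ ⟨(g', Z), hY⟩ (advS tr)
  have ho : o = none := by
    cases o with
    | none => rfl
    | some p => obtain ⟨i, j⟩ := p; simp [MuxDiam] at hR
  subst ho
  have hadv : ∀ (i : ℕ) (h : i < tr.length), advS tr i = (tr[i], tr[i]) := by
    intro i h; simp only [advS]; rw [List.getD_eq_getElem _ _ h]
  have hrunT := phase1 tr (advS tr) hadv P.alice P.bob ⟨(g, Z), hX⟩ ⟨(g', Z), hY⟩ consA consB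
  have hshift : (fun i => advS tr (i + tr.length)) = (fun _ : ℕ => (false, false)) := by
    funext i; simp only [advS]
    rw [List.getD_eq_default tr false (by omega : tr.length ≤ i + tr.length)]
  have hsplit := hdRun_add tr.length hd (advS tr) P.alice P.bob ⟨(g, Z), hX⟩ ⟨(g', Z), hY⟩
  simp only [hrunT, hshift] at hsplit
  have hrun : hdRun Dp (fun _ : ℕ => (false, false))
      (descend P.alice tr ⟨(g, Z), hX⟩) (descend P.bob tr ⟨(g', Z), hY⟩)
      ⟨(g, Z), hX⟩ ⟨(g', Z), hY⟩ = (HDTree.leaf none, HDTree.leaf none) := by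
    rw [← hsplit]
    exact Prod.ext e1 e2
  have hfA : (descend P.alice tr (⟨(g, Z), hX⟩ : AliceMux m n f)).IsFull Dp := by
    have := isFull_descend tr P.alice d P.fullA ⟨(g, Z), hX⟩
    have hEq : d - tr.length = Dp := by omega
    rwa [hEq] at this
  have hfB : (descend P.bob tr (⟨(g', Z), hY⟩ : BobMux m n f)).IsFull Dp := by
    have := isFull_descend tr P.bob d P.fullB ⟨(g', Z), hY⟩
    have hEq : d - tr.length = Dp := by omega
    rwa [hEq] at this
  obtain ⟨s, k, h1, h2, hle, hcls, hncls⟩ :=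
    extract Dp _ _ hfA hfB _ ⟨(g, Z), hX⟩ ⟨(g', Z), hY⟩ none hrun
  exact ⟨(s, k), ⟨Z, hX, consA, h1, hle, hcls, hncls⟩, ⟨Z, hY, consB, h2, hle, hcls, hncls⟩⟩

theorem claim2 (P : HDProt (AliceMux m n f) (BobMux m n f) (Option (Fin m × Fin n)) d)
    (hsol : P.Solves (MuxDiam f)) (hphd : P.PartiallyHD muxGA muxGB)
    (tr : List Bool) (Dp : ℕ) (hd : tr.length + Dp = d) {g : BFunc n}
    {w : List Bool × Kind} (hw : w ∈ Wset P tr Dp g) (hm : w ∈ Mset P tr Dp g) : False := by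
  obtain ⟨s, k⟩ := w
  obtain ⟨X, hX, consA, haccA, hle, hcls, hncls⟩ := hw
  obtain ⟨Y, hY, consB, haccB, -, -, -⟩ := hm
  have hadvT : ∀ (i : ℕ) (h : i < tr.length), advS (tr ++ s) i = (tr[i], tr[i]) := by
    intro i h
    simp only [advS]
    rw [List.getD_append _ _ _ _ h, List.getD_eq_getElem _ _ h]
  have hrunT := phase1 tr (advS (tr ++ s)) hadvT P.alice P.bob ⟨(g, X), hX⟩ ⟨(g, Y), hY⟩
    consA consB
  have hshift : (fun i => advS (tr ++ s) (i + tr.length)) = advS s := by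
    funext i
    simp only [advS]
    rw [List.getD_append_right tr s false (i + tr.length) (by omega), Nat.add_sub_cancel]
  have hadvS : ∀ (i : ℕ) (h : i < s.length), advS s i = (s[i], s[i]) := by
    intro i h; simp only [advS]; rw [List.getD_eq_getElem _ _ h]
  by_cases hk : k = Kind.cls
  · subst hk
    have hlen : s.length = Dp := hcls rfl
    obtain ⟨o, e1, e2, hR⟩ := hsol ⟨(g, X), hX⟩ ⟨(g, Y), hY⟩ (advS (tr ++ s))
    have hsplit := hdRun_add tr.length hd (advS (tr ++ s)) P.alice P.bob
      ⟨(g, X), hX⟩ ⟨(g, Y), hY⟩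
    simp only [hrunT, hshift] at hsplit
    rw [← hlen] at hsplit
    have htrk := track (I := AliceMux m n f) (J := BobMux m n f) s Kind.cls none (advS s) hadvS _ _ ⟨(g, X), hX⟩ ⟨(g, Y), hY⟩ haccA haccB
    rw [← hsplit] at htrk
    rw [e1] at htrk
    have hA := acc_nil_cls htrk.1
    have ho : o = none := by injection hA
    subst ho
    simp [MuxDiam] at hR
  · have hlt : s.length < Dp := hncls hk
    have hAll := hphd ⟨(g, X), hX⟩ ⟨(g, Y), hY⟩ (advS (tr ++ s)) rfl
    have hAll2 := allClassical_add tr.length hd (advS (tr ++ s)) P.alice P.bob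
      ⟨(g, X), hX⟩ ⟨(g, Y), hY⟩ hAll
    simp only [hrunT, hshift] at hAll2
    have hDp : s.length + (Dp - s.length - 1 + 1) = Dp := by omega
    have hAll3 := allClassical_add s.length hDp (advS s)
      (descend P.alice tr ⟨(g, X), hX⟩) (descend P.bob tr ⟨(g, Y), hY⟩)
      ⟨(g, X), hX⟩ ⟨(g, Y), hY⟩ hAll2
    have htrk := track s k none (advS s) hadvS
      (descend P.alice tr ⟨(g, X), hX⟩) (descend P.bob tr ⟨(g, Y), hY⟩)
      ⟨(g, X), hX⟩ ⟨(g, Y), hY⟩ haccA haccB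
    exact acc_nil_notcls hk htrk.1 htrk.2 hAll3.1

def encW (Dp : ℕ) (w : List Bool × Kind) : (Fin Dp → Bool) × Fin (Dp + 1) × Kind :=
  ⟨fun i => w.1.getD i false, ⟨min w.1.length Dp, by omega⟩, w.2⟩

theorem encW_inj {Dp : ℕ} {w w' : List Bool × Kind} (h : w.1.length ≤ Dp)
    (h' : w'.1.length ≤ Dp) (he : encW Dp w = encW Dp w') : w = w' := by
  obtain ⟨s, k⟩ := w
  obtain ⟨s', k'⟩ := w'
  simp only [encW, Prod.mk.injEq] at he
  obtain ⟨hfun, hlen, hkind⟩ := he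
  simp only at h h'
  have hlen' : s.length = s'.length := by
    have := congrArg Fin.val hlen
    simpa [Nat.min_eq_left h, Nat.min_eq_left h'] using this
  have hs : s = s' := by
    apply List.ext_getElem hlen'
    intro i h1 h2
    have hg := congrFun hfun ⟨i, by omega⟩
    simp only [Fin.val_mk] at hg
    rw [List.getD_eq_getElem _ _ h1, List.getD_eq_getElem _ _ h2] at hg
    exact hg
  simp [hs, hkind]

end Stmt4Main

theorem statement4 (m n : ℕ) (f : BFunc m) (hf : NonConst f) (d : ℕ)
    (P : HDProt (AliceMux m n f) (BobMux m n f) (Option (Fin m × Fin n)) d)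
    (hsol : P.Solves (MuxDiam f)) (hphd : P.PartiallyHD muxGA muxGB)
    (tr : List Bool) (htr : P.IsTranscript tr) (hV : (VpiHD P tr).Nonempty)
    (hchi : (4 : ℕ∞) ≤ (charGraphDiamHD P tr (VpiHD P tr)).chromaticNumber) :
    (tr.length : ℝ) +
        Real.logb 2 (Real.logb 2
          (((charGraphDiamHD P tr (VpiHD P tr)).chromaticNumber.toNat : ℝ))) -
        Real.logb 2 (Real.logb 2 (Real.logb 2
          (((charGraphDiamHD P tr (VpiHD P tr)).chromaticNumber.toNat : ℝ)))) - 4 ≤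
      (d : ℝ) := by
  classical
  obtain ⟨⟨x0, hx0⟩, -⟩ := htr
  have hTd : tr.length ≤ d := cons_length_le tr P.alice d P.fullA x0 hx0
  set Dp := d - tr.length with hDpdef
  have hd : tr.length + Dp = d := by omega
  set G := charGraphDiamHD P tr (VpiHD P tr) with hG
  -- the coloring
  let U : Type := (Fin Dp → Bool) × Fin (Dp + 1) × Kind
  let colC : G.Coloring ((U → Bool) × (U → Bool)) :=
    SimpleGraph.Coloring.mk
      (fun g => (fun u => decide (∃ w ∈ Wset P tr Dp g.1, encW Dp w = u),
                 fun u => decide (∃ w ∈ Mset P tr Dp g.1, encW Dp w = u)))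
      (by
        intro gA gB hadj heq
        obtain ⟨hne, hor⟩ := hadj
        rcases hor with ⟨Z, hZX, hZY⟩ | ⟨Z, hZX, hZY⟩
        · obtain ⟨w, hwW, hwM⟩ := claim1 P hsol tr Dp hd hZX hZY
          have h1 : decide (∃ w2 ∈ Wset P tr Dp gA.1, encW Dp w2 = encW Dp w) = true :=
            decide_eq_true ⟨w, hwW, rfl⟩
          have hcomp := congrFun (congrArg Prod.fst heq) (encW Dp w)
          simp only at hcomp
          rw [hcomp] at h1
          obtain ⟨w2, hwW2, hww⟩ := of_decide_eq_true h1
          obtain ⟨-, -, -, -, hlw', -, -⟩ := id hwW2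
          obtain ⟨-, -, -, -, hlw, -, -⟩ := id hwW
          have : w2 = w := encW_inj hlw' hlw hww
          exact claim2 P hsol hphd tr Dp hd (this ▸ hwW2) hwM
        · obtain ⟨w, hwW, hwM⟩ := claim1 P hsol tr Dp hd hZX hZY
          have h1 : decide (∃ w2 ∈ Mset P tr Dp gA.1, encW Dp w2 = encW Dp w) = true :=
            decide_eq_true ⟨w, hwM, rfl⟩
          have hcomp := congrFun (congrArg Prod.snd heq) (encW Dp w)
          simp only at hcomp
          rw [hcomp] at h1
          obtain ⟨w2, hwM2, hww⟩ := of_decide_eq_true h1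
          obtain ⟨-, -, -, -, hlw', -, -⟩ := id hwM2
          obtain ⟨-, -, -, -, hlw, -, -⟩ := id hwM
          have : w2 = w := encW_inj hlw' hlw hww
          exact claim2 P hsol hphd tr Dp hd hwW (this ▸ hwM2))
  have hχle : G.chromaticNumber ≤ (Fintype.card ((U → Bool) × (U → Bool)) : ℕ∞) :=
    colC.colorable.chromaticNumber_le
  have hcardU : Fintype.card U = 2 ^ Dp * ((Dp + 1) * 3) := by
    show Fintype.card ((Fin Dp → Bool) × Fin (Dp + 1) × Kind) = _
    rw [Fintype.card_prod, Fintype.card_prod, Fintype.card_fun, Fintype.card_bool,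
      Fintype.card_fin, Fintype.card_fin, show Fintype.card Kind = 3 from rfl]
  have hcardC : Fintype.card ((U → Bool) × (U → Bool)) =
      2 ^ Fintype.card U * 2 ^ Fintype.card U := by
    rw [Fintype.card_prod, Fintype.card_fun, Fintype.card_bool]
  have hne : G.chromaticNumber ≠ ⊤ :=
    (lt_of_le_of_lt hχle (ENat.coe_lt_top _)).ne
  set c := G.chromaticNumber.toNat with hc
  have hcoe : (c : ℕ∞) = G.chromaticNumber := ENat.coe_toNat hne
  have hc4 : 4 ≤ c := by
    rw [← hcoe] at hchi
    exact_mod_cast hchi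
  have hcle : c ≤ 2 ^ (Fintype.card U + Fintype.card U) := by
    rw [← hcoe, hcardC] at hχle
    rw [pow_add]
    exact_mod_cast hχle
  -- numeric part
  have hKle : Fintype.card U + Fintype.card U ≤ (Dp + 1) * 2 ^ (Dp + 3) := by
    rw [hcardU]
    calc 2 ^ Dp * ((Dp + 1) * 3) + 2 ^ Dp * ((Dp + 1) * 3)
        = (Dp + 1) * (6 * 2 ^ Dp) := by ring
      _ ≤ (Dp + 1) * (8 * 2 ^ Dp) :=
          Nat.mul_le_mul_left _ (Nat.mul_le_mul_right _ (by norm_num))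
      _ = (Dp + 1) * 2 ^ (Dp + 3) := by rw [pow_add]; ring
  have h2R : (1 : ℝ) < 2 := one_lt_two
  have hcR : (4 : ℝ) ≤ (c : ℝ) := by exact_mod_cast hc4
  have hcpos : (0 : ℝ) < (c : ℝ) := by linarith
  have hL2 : (2 : ℝ) ≤ Real.logb 2 (c : ℝ) := by
    have h4 : Real.logb 2 (4 : ℝ) ≤ Real.logb 2 (c : ℝ) :=
      Real.logb_le_logb_of_le h2R (by norm_num) hcR
    have : Real.logb 2 (4 : ℝ) = 2 := by
      rw [show (4 : ℝ) = 2 ^ (2 : ℕ) by norm_num, Real.logb_pow,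
        Real.logb_self_eq_one h2R]
      norm_num
    linarith
  have hLpos : (0 : ℝ) < Real.logb 2 (c : ℝ) := by linarith
  have hLle : Real.logb 2 (c : ℝ) ≤ ((Dp : ℝ) + 1) * 2 ^ (Dp + 3) := by
    have h1 : (c : ℝ) ≤ (2 : ℝ) ^ (Fintype.card U + Fintype.card U) := by
      exact_mod_cast hcle
    have h2' : Real.logb 2 (c : ℝ) ≤ ((Fintype.card U + Fintype.card U : ℕ) : ℝ) := by
      have := Real.logb_le_logb_of_le h2R hcpos h1
      rwa [Real.logb_pow, Real.logb_self_eq_one h2R, mul_one] at this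
    have h3 : ((Fintype.card U + Fintype.card U : ℕ) : ℝ) ≤ ((Dp : ℝ) + 1) * 2 ^ (Dp + 3) := by
      have := hKle
      push_cast
      exact_mod_cast this
    linarith
  have hA1 : (1 : ℝ) ≤ Real.logb 2 (Real.logb 2 (c : ℝ)) := by
    have := Real.logb_le_logb_of_le h2R (by norm_num : (0:ℝ) < 2) hL2
    rwa [Real.logb_self_eq_one h2R] at this
  have hAle : Real.logb 2 (Real.logb 2 (c : ℝ)) ≤
      Real.logb 2 ((Dp : ℝ) + 1) + ((Dp : ℝ) + 3) := by
    have hstep := Real.logb_le_logb_of_le h2R hLpos hLle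
    have hprod : Real.logb 2 (((Dp : ℝ) + 1) * 2 ^ (Dp + 3)) =
        Real.logb 2 ((Dp : ℝ) + 1) + ((Dp : ℝ) + 3) := by
      rw [Real.logb_mul (by positivity) (by positivity), Real.logb_pow,
        Real.logb_self_eq_one h2R, mul_one]
      push_cast
      ring
    linarith
  have hB0 : 0 ≤ Real.logb 2 (Real.logb 2 (Real.logb 2 (c : ℝ))) :=
    Real.logb_nonneg h2R hA1
  have hkey : Real.logb 2 (Real.logb 2 (c : ℝ)) -
      Real.logb 2 (Real.logb 2 (Real.logb 2 (c : ℝ))) ≤ (Dp : ℝ) + 4 := by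
    by_cases hcase : Real.logb 2 (Real.logb 2 (c : ℝ)) ≤ (Dp : ℝ) + 4
    · linarith
    · push_neg at hcase
      have hBge : Real.logb 2 ((Dp : ℝ) + 4) ≤
          Real.logb 2 (Real.logb 2 (Real.logb 2 (c : ℝ))) := by
        apply Real.logb_le_logb_of_le h2R (by positivity)
        linarith
      have hmono : Real.logb 2 ((Dp : ℝ) + 1) ≤ Real.logb 2 ((Dp : ℝ) + 4) :=
        Real.logb_le_logb_of_le h2R (by positivity) (by linarith)
      linarith
  have hdR : (d : ℝ) = (tr.length : ℝ) + (Dp : ℝ) := by exact_mod_cast hd.symm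
  linarith
end

section
/- Let Π be a partially half-duplex protocol solving the strong multiplexor composition KW_f ⊛ MUX_n for some non-constant f:{0,1}^m→{0,1} and n∈ℕ, and let π₁ be a transcript of Π such that V_{π₁}≠∅ and χ(G_{π₁}) ≥ 4. Then the depth of Π is at least |π₁| + log₂ log₂ χ(G_{π₁}) − log₂ log₂ log₂ χ(G_{π₁}) − 4. -/
namespace KRWAux
open HDTree

variable {Xt Yt O : Type}

/-- Follow the consistency path of input `x` along string `π`. -/
def traceC : HDTree Xt O → Xt → List Bool → HDTree Xt O
  | t, _, [] => t
  | HDTree.leaf o, _, _ :: _ => HDTree.leaf o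
  | HDTree.node act child, x, b :: p =>
    match act x with
    | some _ => traceC (child true b) x p
    | none => traceC (child false b) x p

theorem cons_append : ∀ (p : List Bool) (t : HDTree Xt O) (x : Xt) (q : List Bool),
    HDTree.Cons t (p ++ q) x ↔ HDTree.Cons t p x ∧ HDTree.Cons (traceC t x p) q x
  | [], t, x, q => by simp [HDTree.Cons, traceC]
  | b :: p, HDTree.leaf o, x, q => by simp [HDTree.Cons]
  | b :: p, HDTree.node act child, x, q => by
    cases hax : act x with
    | some c =>
      simp [HDTree.Cons, traceC, hax, cons_append p, and_assoc]
    | none =>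
      simp [HDTree.Cons, traceC, hax, cons_append p]

theorem traceC_append : ∀ (p : List Bool) (t : HDTree Xt O) (x : Xt) (q : List Bool),
    traceC t x (p ++ q) = traceC (traceC t x p) x q
  | [], t, x, q => by simp [traceC]
  | b :: p, HDTree.leaf o, x, q => by
    induction q <;> simp [traceC]
  | b :: p, HDTree.node act child, x, q => by
    cases hax : act x <;> simp [traceC, hax, traceC_append p]

theorem isFull_succ {t : HDTree Xt O} {k : ℕ} (h : t.IsFull (k + 1)) :
    ∃ act child, t = HDTree.node act child ∧ ∀ s b, (child s b).IsFull k := by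
  cases h with
  | node h => exact ⟨_, _, rfl, h⟩

theorem isFull_zero {t : HDTree Xt O} (h : t.IsFull 0) : ∃ o, t = HDTree.leaf o := by
  cases h with
  | leaf o => exact ⟨o, rfl⟩

theorem length_le_of_cons : ∀ (p : List Bool) (t : HDTree Xt O) (x : Xt) (e : ℕ),
    HDTree.Cons t p x → t.IsFull e → p.length ≤ e
  | [], _, _, _, _, _ => Nat.zero_le _
  | b :: p, HDTree.leaf o, x, e, hc, _ => absurd hc (by simp [HDTree.Cons])
  | b :: p, HDTree.node act child, x, e, hc, hf => by
    cases hf with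
    | node h =>
      rename_i d
      simp only [List.length_cons]
      have : HDTree.Cons (child true b) p x ∨ HDTree.Cons (child false b) p x := by
        cases hax : act x with
        | some c =>
          simp only [HDTree.Cons, hax] at hc
          exact Or.inl hc.2
        | none =>
          simp only [HDTree.Cons, hax] at hc
          exact Or.inr hc
      rcases this with hc' | hc'
      · exact Nat.succ_le_succ (length_le_of_cons p _ x d hc' (h true b))
      · exact Nat.succ_le_succ (length_le_of_cons p _ x d hc' (h false b))

theorem isFull_traceC : ∀ (p : List Bool) (t : HDTree Xt O) (x : Xt) (e : ℕ),
    t.IsFull (p.length + e) → (traceC t x p).IsFull e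
  | [], t, x, e, h => by simpa [traceC] using h
  | b :: p, t, x, e, h => by
    have h' : t.IsFull ((p.length + e) + 1) := by
      have : (b :: p).length + e = (p.length + e) + 1 := by simp; omega
      rwa [this] at h
    obtain ⟨act, child, rfl, hch⟩ := isFull_succ h'
    cases hax : act x with
    | some c => simpa [traceC, hax] using isFull_traceC p (child true b) x e (hch true b)
    | none => simpa [traceC, hax] using isFull_traceC p (child false b) x e (hch false b)

theorem hdRun_add : ∀ (a b : ℕ) (adv : ℕ → Bool × Bool) (tA : HDTree Xt O) (tB : HDTree Yt O)
    (x : Xt) (y : Yt),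
    hdRun (a + b) adv tA tB x y =
      hdRun b (fun i => adv (i + a)) (hdRun a adv tA tB x y).1 (hdRun a adv tA tB x y).2 x y
  | 0, b, adv, tA, tB, x, y => by simp [hdRun]
  | a + 1, b, adv, tA, tB, x, y => by
    have h : a + 1 + b = (a + b) + 1 := by omega
    rw [h]
    show hdRun (a + b) (fun i => adv (i + 1)) _ _ x y = _
    rw [hdRun_add a b]
    rfl

theorem allClassical_add : ∀ (a b : ℕ) (adv : ℕ → Bool × Bool) (tA : HDTree Xt O)
    (tB : HDTree Yt O) (x : Xt) (y : Yt),
    AllClassical (a + b) adv tA tB x y →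
    AllClassical b (fun i => adv (i + a)) (hdRun a adv tA tB x y).1 (hdRun a adv tA tB x y).2 x y
  | 0, b, adv, tA, tB, x, y, h => by simpa [hdRun] using h
  | a + 1, b, adv, tA, tB, x, y, h => by
    have heq : a + 1 + b = (a + b) + 1 := by omega
    rw [heq] at h
    exact allClassical_add a b (fun i => adv (i + 1)) _ _ x y h.2

end KRWAux
namespace KRWAux
open HDTree

variable {Xt Yt O : Type}

/-- If both players' inputs are consistent with the same string `p`, and the adversary
feeds the bits of `p` in silent rounds, then the run follows the paths of `p`. -/
theorem run_follow : ∀ (p : List Bool) (adv : ℕ → Bool × Bool) (tA : HDTree Xt O)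
    (tB : HDTree Yt O) (x : Xt) (y : Yt),
    (∀ i, i < p.length → adv i = (p.getD i false, p.getD i false)) →
    HDTree.Cons tA p x → HDTree.Cons tB p y →
    hdRun p.length adv tA tB x y = (traceC tA x p, traceC tB y p)
  | [], _, _, _, _, _, _, _, _ => by simp [hdRun, traceC]
  | b :: p, adv, HDTree.leaf o, tB, x, y, hadv, hcA, hcB => absurd hcA (by simp [HDTree.Cons])
  | b :: p, adv, HDTree.node actA chA, HDTree.leaf o, x, y, hadv, hcA, hcB =>
    absurd hcB (by simp [HDTree.Cons])
  | b :: p, adv, HDTree.node actA chA, HDTree.node actB chB, x, y, hadv, hcA, hcB => by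
    have hadv0 : adv 0 = (b, b) := by simpa using hadv 0 (by simp)
    have hadv' : ∀ i, i < p.length →
        (fun i => adv (i + 1)) i = (p.getD i false, p.getD i false) := by
      intro i hi
      simpa using hadv (i + 1) (by simp; omega)
    show hdRun (p.length + 1) adv _ _ x y = _
    rw [hdRun]
    cases haxA : actA x with
    | some c =>
      have hcA' : c = b ∧ HDTree.Cons (chA true b) p x := by
        simpa [HDTree.Cons, haxA] using hcA
      cases haxB : actB y with
      | some c' =>
        have hcB' : c' = b ∧ HDTree.Cons (chB true b) p y := by
          simpa [HDTree.Cons, haxB] using hcB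
        simp only [hdStep, haxA, haxB, hcA'.1, hcB'.1, traceC]
        exact run_follow p _ _ _ x y hadv' hcA'.2 hcB'.2
      | none =>
        have hcB' : HDTree.Cons (chB false b) p y := by
          simpa [HDTree.Cons, haxB] using hcB
        simp only [hdStep, haxA, haxB, hcA'.1, Option.getD_some, traceC]
        exact run_follow p _ _ _ x y hadv' hcA'.2 hcB'
    | none =>
      have hcA' : HDTree.Cons (chA false b) p x := by
        simpa [HDTree.Cons, haxA] using hcA
      cases haxB : actB y with
      | some c' =>
        have hcB' : c' = b ∧ HDTree.Cons (chB true b) p y := by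
          simpa [HDTree.Cons, haxB] using hcB
        simp only [hdStep, haxA, haxB, hcB'.1, Option.getD_some, traceC]
        exact run_follow p _ _ _ x y hadv' hcA' hcB'.2
      | none =>
        have hcB' : HDTree.Cons (chB false b) p y := by
          simpa [HDTree.Cons, haxB] using hcB
        simp only [hdStep, haxA, haxB, hadv0, Option.getD_none, traceC]
        exact run_follow p _ _ _ x y hadv' hcA' hcB'

/-- Dichotomy: against the all-false adversary, either the two players follow a common
string all the way down, or they reach a common prefix after which both send, with
opposite bits. -/
theorem dichotomy : ∀ (e : ℕ) (tA : HDTree Xt O) (tB : HDTree Yt O) (x : Xt) (y : Yt),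
    tA.IsFull e → tB.IsFull e →
    (∃ γ : List Bool, γ.length = e ∧ HDTree.Cons tA γ x ∧ HDTree.Cons tB γ y ∧
        hdRun e (fun _ => (false, false)) tA tB x y = (traceC tA x γ, traceC tB y γ)) ∨
    (∃ γ : List Bool, ∃ c : Bool, γ.length < e ∧ HDTree.Cons tA γ x ∧ HDTree.Cons tB γ y ∧
        (∃ act ch, traceC tA x γ = HDTree.node act ch ∧ act x = some c) ∧
        (∃ act ch, traceC tB y γ = HDTree.node act ch ∧ act y = some (!c))) := by
  intro e
  induction e with
  | zero =>
    intro tA tB x y _ _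
    exact Or.inl ⟨[], rfl, by simp [HDTree.Cons], by simp [HDTree.Cons], by simp [hdRun, traceC]⟩
  | succ k ih =>
    intro tA tB x y hfA hfB
    obtain ⟨actA, chA, rfl, hchA⟩ := isFull_succ hfA
    obtain ⟨actB, chB, rfl, hchB⟩ := isFull_succ hfB
    cases haxA : actA x with
    | some c =>
      cases haxB : actB y with
      | some c' =>
        by_cases hcc : c' = c
        · have haxB : actB y = some c := by rw [haxB, hcc]
          have hstep : hdStep (HDTree.node actA chA) (HDTree.node actB chB) x y (false, false)
              = (chA true c, chB true c) := by
            simp [hdStep, haxA, haxB]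
          rcases ih (chA true c) (chB true c) x y (hchA true c) (hchB true c) with
            ⟨γ, hlen, hcA, hcB, hrun⟩ | ⟨γ, c0, hlen, hcA, hcB, hnA, hnB⟩
          · left
            refine ⟨c :: γ, by simp [hlen], by simp [HDTree.Cons, haxA, hcA],
              by simp [HDTree.Cons, haxB, hcB], ?_⟩
            show hdRun (k + 1) _ _ _ x y = _
            rw [hdRun, hstep]
            simpa [traceC, haxA, haxB] using hrun
          · right
            exact ⟨c :: γ, c0, by simp; omega, by simp [HDTree.Cons, haxA, hcA],
              by simp [HDTree.Cons, haxB, hcB],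
              by simpa [traceC, haxA] using hnA, by simpa [traceC, haxB] using hnB⟩
        · right
          have hc' : c' = !c := by cases c <;> cases c' <;> simp_all
          exact ⟨[], c, by simp, by simp [HDTree.Cons], by simp [HDTree.Cons],
            ⟨actA, chA, by simp [traceC], haxA⟩,
            ⟨actB, chB, by simp [traceC], by rw [haxB, hc']⟩⟩
      | none =>
        have hstep : hdStep (HDTree.node actA chA) (HDTree.node actB chB) x y (false, false)
            = (chA true c, chB false c) := by
          simp [hdStep, haxA, haxB]
        rcases ih (chA true c) (chB false c) x y (hchA true c) (hchB false c) with
          ⟨γ, hlen, hcA, hcB, hrun⟩ | ⟨γ, c0, hlen, hcA, hcB, hnA, hnB⟩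
        · left
          refine ⟨c :: γ, by simp [hlen], by simp [HDTree.Cons, haxA, hcA],
            by simp [HDTree.Cons, haxB, hcB], ?_⟩
          show hdRun (k + 1) _ _ _ x y = _
          rw [hdRun, hstep]
          simpa [traceC, haxA, haxB] using hrun
        · right
          exact ⟨c :: γ, c0, by simp; omega, by simp [HDTree.Cons, haxA, hcA],
            by simp [HDTree.Cons, haxB, hcB],
            by simpa [traceC, haxA] using hnA, by simpa [traceC, haxB] using hnB⟩
    | none =>
      cases haxB : actB y with
      | some c =>
        have hstep : hdStep (HDTree.node actA chA) (HDTree.node actB chB) x y (false, false)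
            = (chA false c, chB true c) := by
          simp [hdStep, haxA, haxB]
        rcases ih (chA false c) (chB true c) x y (hchA false c) (hchB true c) with
          ⟨γ, hlen, hcA, hcB, hrun⟩ | ⟨γ, c0, hlen, hcA, hcB, hnA, hnB⟩
        · left
          refine ⟨c :: γ, by simp [hlen], by simp [HDTree.Cons, haxA, hcA],
            by simp [HDTree.Cons, haxB, hcB], ?_⟩
          show hdRun (k + 1) _ _ _ x y = _
          rw [hdRun, hstep]
          simpa [traceC, haxA, haxB] using hrun
        · right
          exact ⟨c :: γ, c0, by simp; omega, by simp [HDTree.Cons, haxA, hcA],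
            by simp [HDTree.Cons, haxB, hcB],
            by simpa [traceC, haxA] using hnA, by simpa [traceC, haxB] using hnB⟩
      | none =>
        have hstep : hdStep (HDTree.node actA chA) (HDTree.node actB chB) x y (false, false)
            = (chA false false, chB false false) := by
          simp [hdStep, haxA, haxB]
        rcases ih (chA false false) (chB false false) x y (hchA false false)
            (hchB false false) with
          ⟨γ, hlen, hcA, hcB, hrun⟩ | ⟨γ, c0, hlen, hcA, hcB, hnA, hnB⟩
        · left
          refine ⟨false :: γ, by simp [hlen], by simp [HDTree.Cons, haxA, hcA],
            by simp [HDTree.Cons, haxB, hcB], ?_⟩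
          show hdRun (k + 1) _ _ _ x y = _
          rw [hdRun, hstep]
          simpa [traceC, haxA, haxB] using hrun
        · right
          exact ⟨false :: γ, c0, by simp; omega, by simp [HDTree.Cons, haxA, hcA],
            by simp [HDTree.Cons, haxB, hcB],
            by simpa [traceC, haxA] using hnA, by simpa [traceC, haxB] using hnB⟩

end KRWAux
namespace KRWAux

variable {m n : ℕ} {f : BFunc m} {d : ℕ}

/-- The witness type: a string of length at most `D` together with a flag. -/
abbrev Wit (D : ℕ) : Type := ((k : Fin (D + 1)) × (Fin k.1 → Bool)) × Bool

/-- The list encoded by a witness. -/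
def witList {D : ℕ} (w : Wit D) : List Bool := List.ofFn w.1.2

theorem witList_length {D : ℕ} (w : Wit D) : (witList w).length = w.1.1.1 := by
  simp [witList]

/-- Alice accepts the witness `w`. -/
def AccA (P : HDProt (AliceMux m n f) (BobMux m n f) (Option (Fin m × Fin n)) d)
    (tr : List Bool) {D : ℕ} (g : BFunc n) (w : Wit D) : Prop :=
  if w.2 then
    ∃ γ : List Bool, ∃ c : Bool, witList w = γ ++ [c] ∧ ∃ x : AliceMux m n f, x.1.1 = g ∧
      HDTree.Cons P.alice (tr ++ γ) x ∧
      ∃ act ch, traceC P.alice x (tr ++ γ) = HDTree.node act ch ∧ act x = some c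
  else
    w.1.1.1 = D ∧ ∃ x : AliceMux m n f, x.1.1 = g ∧
      HDTree.Cons P.alice (tr ++ witList w) x ∧
      traceC P.alice x (tr ++ witList w) = HDTree.leaf none

/-- Bob accepts the witness `w`. -/
def AccB (P : HDProt (AliceMux m n f) (BobMux m n f) (Option (Fin m × Fin n)) d)
    (tr : List Bool) {D : ℕ} (g : BFunc n) (w : Wit D) : Prop :=
  if w.2 then
    ∃ γ : List Bool, ∃ c : Bool, witList w = γ ++ [c] ∧ ∃ y : BobMux m n f, y.1.1 = g ∧
      HDTree.Cons P.bob (tr ++ γ) y ∧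
      ∃ act ch, traceC P.bob y (tr ++ γ) = HDTree.node act ch ∧ act y = some (!c)
  else
    w.1.1.1 = D ∧ ∃ y : BobMux m n f, y.1.1 = g ∧
      HDTree.Cons P.bob (tr ++ witList w) y ∧
      traceC P.bob y (tr ++ witList w) = HDTree.leaf none

/-- No witness is accepted by both players on the same function `g`. -/
theorem diag_reject (P : HDProt (AliceMux m n f) (BobMux m n f) (Option (Fin m × Fin n)) d)
    (hsol : P.Solves (MuxStrong f)) (hphd : P.PartiallyHD muxGA muxGB)
    (tr : List Bool) {D : ℕ} (hd : tr.length + D = d) (g : BFunc n) (w : Wit D)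
    (hA : AccA P tr g w) (hB : AccB P tr g w) : False := by
  cases hflag : w.2 with
  | false =>
    rw [AccA, hflag, if_neg (by simp)] at hA
    rw [AccB, hflag, if_neg (by simp)] at hB
    obtain ⟨hlenA, x, hxg, hconsA, htraceA⟩ := hA
    obtain ⟨_, y, hyg, hconsB, htraceB⟩ := hB
    set s : List Bool := tr ++ witList w with hs
    have hslen : s.length = d := by
      rw [hs, List.length_append, witList_length, hlenA, hd]
    set adv : ℕ → Bool × Bool := fun i => (s.getD i false, s.getD i false) with hadv
    have hrun := run_follow s adv P.alice P.bob x y (fun i _ => rfl) hconsA hconsB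
    rw [hslen] at hrun
    obtain ⟨o, h1, h2, hR⟩ := hsol x y adv
    rw [hrun] at h1
    simp only [htraceA, HDTree.leaf.injEq] at h1
    rw [← h1] at hR
    simp only [MuxStrong] at hR
    exact hR (by rw [hxg, hyg])
  | true =>
    rw [AccA, hflag, if_pos rfl] at hA
    rw [AccB, hflag, if_pos rfl] at hB
    obtain ⟨γA, cA, hlA, x, hxg, hconsA, actX, chX, htrA, hactA⟩ := hA
    obtain ⟨γB, cB, hlB, y, hyg, hconsB, actY, chY, htrB, hactB⟩ := hB
    -- The two decompositions of `witList w` coincide.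
    have hlen : γA.length = γB.length := by
      have := congrArg List.length (hlA.symm.trans hlB)
      simpa using this
    obtain ⟨rfl, hc⟩ := List.append_inj (hlA.symm.trans hlB) hlen
    have hcc : cA = cB := by simpa using hc
    subst hcc
    -- positions
    have hq : (tr ++ γA).length + 1 ≤ d := by
      have h1 : γA.length + 1 = (witList w).length := by rw [hlA]; simp
      have h2 : (witList w).length ≤ D := by
        rw [witList_length]
        exact Nat.lt_succ_iff.mp w.1.1.2
      simp only [List.length_append]
      omega
    set q : ℕ := (tr ++ γA).length with hqdef
    set adv : ℕ → Bool × Bool :=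
      fun i => ((tr ++ γA).getD i false, (tr ++ γA).getD i false) with hadv
    have hrun := run_follow (tr ++ γA) adv P.alice P.bob x y (fun i _ => rfl) hconsA hconsB
    have hgg : muxGA x = muxGB y := by
      show x.1.1 = y.1.1
      rw [hxg, hyg]
    have hall := hphd x y adv hgg
    have hdq : q + (d - q) = d := by omega
    have hall' : AllClassical (q + (d - q)) adv P.alice P.bob x y := by
      rw [hdq]; exact hall
    have hall2 := allClassical_add q (d - q) adv P.alice P.bob x y hall'
    rw [hrun, htrA, htrB] at hall2
    obtain ⟨r, hr⟩ : ∃ r, d - q = r + 1 := ⟨d - q - 1, by omega⟩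
    rw [hr] at hall2
    have hcl : ClassicalRound (HDTree.node actX chX) (HDTree.node actY chY) x y := hall2.1
    rw [ClassicalRound] at hcl
    rw [hactA, hactB] at hcl
    simp at hcl

end KRWAux
namespace KRWAux

variable {m n : ℕ} {f : BFunc m} {d : ℕ}

/-- If `gA`, `gB` satisfy the weak intersection property, some witness is accepted by
Alice on `gA` and by Bob on `gB`. -/
theorem adj_accept (P : HDProt (AliceMux m n f) (BobMux m n f) (Option (Fin m × Fin n)) d)
    (hsol : P.Solves (MuxStrong f))
    (tr : List Bool) {D : ℕ} (hd : tr.length + D = d) {gA gB : BFunc n}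
    (hWI : WeakIntersectHD P tr gA gB) :
    ∃ w : Wit D, AccA P tr gA w ∧ AccB P tr gB w := by
  obtain ⟨X, hX, Y, hY, hkey⟩ := hWI
  obtain ⟨hfX, hconsX⟩ := hX
  obtain ⟨hfY, hconsY⟩ := hY
  set x : AliceMux m n f := ⟨(gA, X), hfX⟩ with hxdef
  set y : BobMux m n f := ⟨(gB, Y), hfY⟩ with hydef
  set adv : ℕ → Bool × Bool := fun i => (tr.getD i false, tr.getD i false) with hadv
  have hrun1 := run_follow tr adv P.alice P.bob x y (fun i _ => rfl) hconsX hconsY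
  set tA' := traceC P.alice x tr with htAdef
  set tB' := traceC P.bob y tr with htBdef
  have hfA' : tA'.IsFull D := isFull_traceC tr P.alice x D (by rw [hd]; exact P.fullA)
  have hfB' : tB'.IsFull D := isFull_traceC tr P.bob y D (by rw [hd]; exact P.fullB)
  have hshift : (fun i => adv (i + tr.length)) = (fun _ => ((false : Bool), (false : Bool))) := by
    funext i
    have h0 : tr.getD (i + tr.length) false = false :=
      List.getD_eq_default _ _ (by omega)
    simp only [hadv]
    rw [h0]
  have htot : hdRun d adv P.alice P.bob x y
      = hdRun D (fun _ => (false, false)) tA' tB' x y := by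
    have h1 : hdRun d adv P.alice P.bob x y
        = hdRun (tr.length + D) adv P.alice P.bob x y := by rw [hd]
    rw [h1, hdRun_add tr.length D, hrun1, hshift]
  rcases dichotomy D tA' tB' x y hfA' hfB' with
    ⟨γ, hlen, hcA, hcB, hrun2⟩ | ⟨γ, c, hlen, hcA, hcB, ⟨actX, chX, htrX, hactX⟩,
      ⟨actY, chY, htrY, hactY⟩⟩
  · -- common string all the way to the leaves; the output must be ⊥
    obtain ⟨o, h1, h2, hR⟩ := hsol x y adv
    have ho : o = none := by
      cases o with
      | none => rfl
      | some ij =>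
        obtain ⟨i, j⟩ := ij
        simp only [MuxStrong] at hR
        exact absurd (congrFun (hkey i hR.2) j) hR.1
    subst ho
    rw [htot, hrun2] at h1 h2
    dsimp only at h1 h2
    have htrA : traceC P.alice x (tr ++ γ) = HDTree.leaf none := by
      rw [traceC_append, ← htAdef, h1]
    have htrB : traceC P.bob y (tr ++ γ) = HDTree.leaf none := by
      rw [traceC_append, ← htBdef, h2]
    refine ⟨(⟨⟨γ.length, by omega⟩, fun i => γ[i]⟩, false), ?_, ?_⟩
    · rw [AccA, if_neg (by simp)]
      have hwl : witList ((⟨⟨γ.length, by omega⟩, fun i => γ[i]⟩, false) : Wit D)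
          = γ := List.ofFn_getElem (xs := γ)
      rw [hwl]
      exact ⟨hlen, x, rfl, (cons_append tr P.alice x γ).mpr ⟨hconsX, hcA⟩, htrA⟩
    · rw [AccB, if_neg (by simp)]
      have hwl : witList ((⟨⟨γ.length, by omega⟩, fun i => γ[i]⟩, false) : Wit D)
          = γ := List.ofFn_getElem (xs := γ)
      rw [hwl]
      exact ⟨hlen, y, rfl, (cons_append tr P.bob y γ).mpr ⟨hconsY, hcB⟩, htrB⟩
  · -- divergence: both send, opposite bits
    have hlen1 : (γ ++ [c]).length < D + 1 := by simp; omega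
    have hwl : witList ((⟨⟨(γ ++ [c]).length, hlen1⟩, fun i => (γ ++ [c])[i.1]⟩, true) : Wit D)
        = γ ++ [c] := List.ofFn_getElem (xs := γ ++ [c])
    refine ⟨(⟨⟨(γ ++ [c]).length, hlen1⟩, fun i => (γ ++ [c])[i.1]⟩, true), ?_, ?_⟩
    · rw [AccA, if_pos rfl]
      exact ⟨γ, c, hwl, x, rfl, (cons_append tr P.alice x γ).mpr ⟨hconsX, hcA⟩,
        actX, chX, by rw [traceC_append, ← htAdef, htrX], hactX⟩
    · rw [AccB, if_pos rfl]
      exact ⟨γ, c, hwl, y, rfl, (cons_append tr P.bob y γ).mpr ⟨hconsY, hcB⟩,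
        actY, chY, by rw [traceC_append, ← htBdef, htrY], hactY⟩

end KRWAux
open KRWAux in
theorem statement5 (m n : ℕ) (f : BFunc m) (hf : NonConst f) (d : ℕ)
    (P : HDProt (AliceMux m n f) (BobMux m n f) (Option (Fin m × Fin n)) d)
    (hsol : P.Solves (MuxStrong f)) (hphd : P.PartiallyHD muxGA muxGB)
    (tr : List Bool) (htr : P.IsTranscript tr) (hV : (VpiHD P tr).Nonempty)
    (hchi : (4 : ℕ∞) ≤ (charGraphStrongHD P tr (VpiHD P tr)).chromaticNumber) :
    (tr.length : ℝ) +
        Real.logb 2 (Real.logb 2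
          (((charGraphStrongHD P tr (VpiHD P tr)).chromaticNumber.toNat : ℝ))) -
        Real.logb 2 (Real.logb 2 (Real.logb 2
          (((charGraphStrongHD P tr (VpiHD P tr)).chromaticNumber.toNat : ℝ)))) - 4 ≤
      (d : ℝ) := by
  classical
  -- the transcript is not longer than the protocol
  obtain ⟨⟨x0, hx0⟩, -⟩ := htr
  have hLd : tr.length ≤ d := length_le_of_cons tr P.alice x0 d hx0 P.fullA
  set D : ℕ := d - tr.length with hDdef
  have hd : tr.length + D = d := by omega
  -- the coloring
  set G := charGraphStrongHD P tr (VpiHD P tr) with hG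
  let col : ↥(VpiHD P tr) → (Wit D → Bool) × (Wit D → Bool) := fun g =>
    (fun w => decide (AccA P tr (g : BFunc n) w), fun w => decide (AccB P tr (g : BFunc n) w))
  have hproper : ∀ {u v : ↥(VpiHD P tr)}, G.Adj u v → col u ≠ col v := by
    intro u v hadj heq
    obtain ⟨hne, hwi⟩ := hadj
    have hA : ∀ w, decide (AccA P tr (u : BFunc n) w) = decide (AccA P tr (v : BFunc n) w) :=
      fun w => congrFun (congrArg Prod.fst heq) w
    have hB : ∀ w, decide (AccB P tr (u : BFunc n) w) = decide (AccB P tr (v : BFunc n) w) :=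
      fun w => congrFun (congrArg Prod.snd heq) w
    rcases hwi with hwi | hwi
    · obtain ⟨w, hau, hbv⟩ := adj_accept P hsol tr hd hwi
      have hbu : AccB P tr (u : BFunc n) w := by
        have := hB w
        rw [decide_eq_true hbv] at this
        exact of_decide_eq_true this
      exact diag_reject P hsol hphd tr hd _ w hau hbu
    · obtain ⟨w, hav, hbu⟩ := adj_accept P hsol tr hd hwi
      have hau : AccA P tr (u : BFunc n) w := by
        have := hA w
        rw [decide_eq_true hav] at this
        exact of_decide_eq_true this
      exact diag_reject P hsol hphd tr hd _ w hau hbu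
  have hcolorable : G.Colorable (Fintype.card ((Wit D → Bool) × (Wit D → Bool))) :=
    (SimpleGraph.Coloring.mk col fun hadj => hproper hadj).colorable
  -- counting
  have hgeom : ∀ M : ℕ, (∑ i ∈ Finset.range M, 2 ^ i) < 2 ^ M := by
    intro M
    induction M with
    | zero => simp
    | succ k ih => rw [Finset.sum_range_succ, pow_succ]; omega
  have hcw : Fintype.card (Wit D) ≤ 2 ^ (D + 2) := by
    have h1 : Fintype.card (Wit D) = (∑ k : Fin (D + 1), 2 ^ (k : ℕ)) * 2 := by
      simp [Wit, Fintype.card_sigma, Fintype.card_fun]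
    rw [h1, Fin.sum_univ_eq_sum_range (fun i => 2 ^ i) (D + 1)]
    have := hgeom (D + 1)
    have h2 : (2:ℕ) ^ (D + 2) = 2 ^ (D + 1) * 2 := by ring
    omega
  have hcardCol : Fintype.card ((Wit D → Bool) × (Wit D → Bool)) ≤ 2 ^ (2 ^ (D + 3)) := by
    have h1 : Fintype.card ((Wit D → Bool) × (Wit D → Bool))
        = 2 ^ (Fintype.card (Wit D) + Fintype.card (Wit D)) := by
      simp [Fintype.card_fun, pow_add]
    rw [h1]
    apply Nat.pow_le_pow_right (by norm_num)
    have h3 : (2:ℕ) ^ (D + 3) = 2 ^ (D + 2) + 2 ^ (D + 2) := by ring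
    omega
  -- chromatic number bound
  set N : ℕ := 2 ^ (2 ^ (D + 3)) with hN
  have hcnle : G.chromaticNumber ≤ (N : ℕ∞) := by
    refine le_trans hcolorable.chromaticNumber_le ?_
    exact_mod_cast Nat.cast_le.mpr hcardCol
  have hne_top : G.chromaticNumber ≠ ⊤ := ne_top_of_le_ne_top (WithTop.coe_ne_top) hcnle
  set χt : ℕ := G.chromaticNumber.toNat with hχt
  have hχ4 : 4 ≤ χt := by
    have := ENat.toNat_le_toNat hchi hne_top
    simpa using this
  have hχN : χt ≤ N := by
    have := ENat.toNat_le_toNat hcnle (WithTop.coe_ne_top)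
    simpa using this
  -- real arithmetic
  have hb : (1:ℝ) < 2 := one_lt_two
  have hχ4R : (4:ℝ) ≤ (χt : ℝ) := by exact_mod_cast hχ4
  have hχNR : (χt : ℝ) ≤ (2:ℝ) ^ (2 ^ (D + 3)) := by
    have : (χt : ℝ) ≤ (N : ℝ) := by exact_mod_cast hχN
    rw [hN] at this
    push_cast at this
    exact this
  have hlog2 : Real.logb 2 2 = 1 := Real.logb_self_eq_one hb
  have hl1_lb : (2:ℝ) ≤ Real.logb 2 (χt : ℝ) := by
    have h4 : Real.logb 2 (4:ℝ) = 2 := by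
      rw [show (4:ℝ) = 2 ^ (2:ℕ) by norm_num, Real.logb_pow, hlog2]
      norm_num
    calc (2:ℝ) = Real.logb 2 4 := h4.symm
      _ ≤ Real.logb 2 (χt : ℝ) := Real.logb_le_logb_of_le hb (by norm_num) hχ4R
  have hl1_ub : Real.logb 2 (χt : ℝ) ≤ (2:ℝ) ^ (D + 3 : ℕ) := by
    calc Real.logb 2 (χt : ℝ) ≤ Real.logb 2 ((2:ℝ) ^ (2 ^ (D + 3))) :=
          Real.logb_le_logb_of_le hb (by linarith) hχNR
      _ = (2:ℝ) ^ (D + 3 : ℕ) := by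
          rw [Real.logb_pow, hlog2]
          push_cast
          ring
  have hl2_lb : (1:ℝ) ≤ Real.logb 2 (Real.logb 2 (χt : ℝ)) := by
    calc (1:ℝ) = Real.logb 2 2 := hlog2.symm
      _ ≤ Real.logb 2 (Real.logb 2 (χt : ℝ)) :=
          Real.logb_le_logb_of_le hb (by norm_num) hl1_lb
  have hl2_ub : Real.logb 2 (Real.logb 2 (χt : ℝ)) ≤ (D : ℝ) + 3 := by
    calc Real.logb 2 (Real.logb 2 (χt : ℝ)) ≤ Real.logb 2 ((2:ℝ) ^ (D + 3 : ℕ)) :=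
          Real.logb_le_logb_of_le hb (by linarith) hl1_ub
      _ = (D : ℝ) + 3 := by
          rw [Real.logb_pow, hlog2]
          push_cast
          ring
  have hl3_nonneg : 0 ≤ Real.logb 2 (Real.logb 2 (Real.logb 2 (χt : ℝ))) :=
    Real.logb_nonneg hb hl2_lb
  have hds : (tr.length : ℝ) + (D : ℝ) = (d : ℝ) := by exact_mod_cast hd

  linarith
end
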